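/- arXiv:1905.09223 — 6 statements merged into one kernel-verified Lean document; each statement's English description precedes it below -/
import Mathlib

section
/- Let α be a real number with α − max G ∉ {0, −1, −2, …} and assume Ω_G(n) ≠ 0 for every integer n ≥ 0. Then, with no assumptions on the real numbers κ_i^g (i = 0,…,m−1, g ∈ G), one has ⟨q_n, x^i⟩ = 0 for every n ≥ m and every 0 ≤ i ≤ n−1, where ⟨·,·⟩ is the bilinear form defined below. -/
open Polynomial Finset

/-- Pochhammer symbol `(a)_l = a (a+1) ⋯ (a+l-1)`, with `(a)_0 = 1`. -/
noncomputable def poch (a : ℝ) (l : ℕ) : ℝ := ∏ t ∈ Finset.range l, (a + t)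

/-- Generalized binomial coefficient `binom (n+α, n−j) = (α+j+1)⋯(α+n)/(n−j)!`. -/
noncomputable def genBinom (α : ℝ) (n j : ℕ) : ℝ :=
  (∏ t ∈ Finset.Ico (j + 1) (n + 1), (α + t)) / (Nat.factorial (n - j) : ℝ)

/-- Laguerre polynomial `L_n^α(x) = Σ_{j=0}^n ((−x)^j/j!)·binom(n+α, n−j)`. -/
noncomputable def laguerre (α : ℝ) (n : ℕ) : Polynomial ℝ :=
  ∑ j ∈ Finset.range (n + 1),
    Polynomial.C ((-1 : ℝ) ^ j / (Nat.factorial j : ℝ) * genBinom α n j) * Polynomial.X ^ j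

/-- Laguerre polynomials indexed by `ℤ`, with the convention `L_u^α = 0` for `u < 0`. -/
noncomputable def laguerreZ (α : ℝ) (n : ℤ) : Polynomial ℝ :=
  if n < 0 then 0 else laguerre α n.toNat

/-- The polynomial `binom (x+l, l) = (x+1)(x+2)⋯(x+l)/l!`. -/
noncomputable def binomPoly (l : ℕ) : Polynomial ℝ :=
  Polynomial.C ((Nat.factorial l : ℝ)⁻¹) *
    ∏ t ∈ Finset.range l, (Polynomial.X + Polynomial.C ((t : ℝ) + 1))

/-- The Casoratian `Ω_G(x) = det (R_{g_l}(x−j))_{l,j=1,…,m}`. -/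
noncomputable def casoratian {m : ℕ} (R : Fin m → Polynomial ℝ) (x : ℝ) : ℝ :=
  Matrix.det (Matrix.of fun l j : Fin m => (R l).eval (x - ((j : ℕ) + 1)))

/-- The maximum of the finite set `G` (given by the values of `g`). -/
noncomputable def Gmax {m : ℕ} (g : Fin m → ℕ) : ℕ := Finset.univ.sup g

/-- The polynomial `q_n`, defined as an `(m+1)×(m+1)` determinant whose first row is
`(L_n^α(x), …, L_{n−m}^α(x))` and whose `(h+1)`-th row is `(R_{g_h}(n), …, R_{g_h}(n−m))`. -/
noncomputable def qpoly (α : ℝ) {m : ℕ} (R : Fin m → Polynomial ℝ) (n : ℤ) : Polynomial ℝ :=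
  Matrix.det (Matrix.of fun i j : Fin (m + 1) =>
    if h : (i : ℕ) = 0 then laguerreZ α (n - (j : ℕ))
    else Polynomial.C ((R ⟨(i : ℕ) - 1, by have := i.isLt; omega⟩).eval ((n : ℝ) - ((j : ℕ) : ℝ))))

/-- `q_n` extended by the convention `q_k = 0` for `k < 0`. -/
noncomputable def qZ (α : ℝ) {m : ℕ} (R : Fin m → Polynomial ℝ) (n : ℤ) : Polynomial ℝ :=
  if n < 0 then 0 else qpoly α R n

/-- `momFun β p k = L_β(p(x)·x^k)`, where `L_β` is the moment functional on Laurent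
polynomials determined by `L_β(x^j) = Γ(β+j+1)`. -/
noncomputable def momFun (β : ℝ) (p : Polynomial ℝ) (k : ℤ) : ℝ :=
  ∑ t ∈ Finset.range (p.natDegree + 1), p.coeff t * Real.Gamma (β + t + k + 1)

/-- The bilinear form `⟨p, q⟩ = L_{α−m}(p·q) + Σ_{i=0}^{m−1} (q^{(i)}(0)/i!)·L_α(p·U_i)`,
where `U_i(x) = Σ_{g∈G} ( −x^{i−m}/m + κ_i^g·Σ_{l=0}^g (α−l)_l w_l^g x^{−l−1} )`. -/
noncomputable def bilin (α : ℝ) {m : ℕ} (g : Fin m → ℕ) (κ : ℕ → Fin m → ℝ)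
    (w : Fin m → ℕ → ℝ) (p q : Polynomial ℝ) : ℝ :=
  momFun (α - m) (p * q) 0 +
    ∑ i ∈ Finset.range m,
      (Polynomial.eval 0 (Polynomial.derivative^[i] q) / (Nat.factorial i : ℝ)) *
        (∑ h : Fin m,
          (-(1 / (m : ℝ)) * momFun α p ((i : ℤ) - (m : ℤ)) +
            κ i h * ∑ l ∈ Finset.range (g h + 1),
              poch (α - l) l * w h l * momFun α p (-((l : ℤ) + 1))))

/-- The bilinear form `⟨p, q⟩_ξ` (case `α` a positive integer with `α ≤ max G`). -/
noncomputable def bilinXi (α : ℕ) {m : ℕ} (g : Fin m → ℕ) (κ : ℕ → Fin m → ℝ)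
    (w : Fin m → ℕ → ℝ) (p q : Polynomial ℝ) : ℝ :=
  momFun ((α - m : ℕ) : ℝ) (p * Polynomial.derivative^[m - α] q) 0 +
    ∑ i ∈ Finset.range m,
      (Polynomial.eval 0 (Polynomial.derivative^[i] q) / (Nat.factorial i : ℝ)) *
        (∑ h : Fin m,
          (poch ((i : ℝ) - m + α + 1) (m - α) * (-(1 / (m : ℝ))) * momFun α p ((i : ℤ) - (m : ℤ)) +
            κ i h * ∑ l ∈ Finset.range (if g h < α then g h + 1 else α),
              poch ((α : ℝ) - l) l * w h l * momFun α p (-((l : ℤ) + 1)))) +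
    Real.Gamma α *
      ∑ i ∈ Finset.range m,
        (Polynomial.eval 0 (Polynomial.derivative^[i] q) / (Nat.factorial i : ℝ)) *
          ∑ h ∈ Finset.univ.filter (fun h : Fin m => α ≤ g h),
            κ i h *
              ∑ j ∈ Finset.range (g h - α + 1),
                (Polynomial.eval 0 (Polynomial.derivative^[j] p) / (Nat.factorial j : ℝ)) *
                  ∑ l ∈ Finset.Icc (α + j) (g h), poch ((α : ℝ) - l) j * w h l

lemma poch_zero (a : ℝ) : poch a 0 = 1 := by simp [poch]

lemma poch_succ (a : ℝ) (l : ℕ) : poch a (l + 1) = poch a l * (a + l) := by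
  simp [poch, Finset.prod_range_succ]

lemma poch_succ' (a : ℝ) (l : ℕ) : poch a (l + 1) = a * poch (a + 1) l := by
  rw [poch, poch, Finset.prod_range_succ']
  have h0 : (a + ((0:ℕ):ℝ)) = a := by norm_num
  rw [h0, mul_comm]
  congr 1
  apply Finset.prod_congr rfl
  intro t _
  push_cast; ring

lemma poch_add (a : ℝ) (s t : ℕ) : poch a (s + t) = poch a s * poch (a + s) t := by
  induction t with
  | zero => simp [poch_zero]
  | succ t ih => rw [← Nat.add_assoc, poch_succ, ih, poch_succ]; push_cast; ring

/-- Master identity. -/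
lemma master (r : ℕ) : ∀ (a b : ℝ),
    ∑ j ∈ Finset.range (r + 1),
      (-1 : ℝ) ^ j * (r.choose j : ℝ) * poch b j * poch (a + j + 1) (r - j)
      = poch (a + 1 - b) r := by
  induction r with
  | zero => intro a b; simp [poch_zero]
  | succ r ih =>
    intro a b
    set f : ℕ → ℝ := fun j => (-1 : ℝ) ^ j * ((r+1).choose j : ℝ) * poch b j * poch (a + j + 1) (r + 1 - j) with hf
    set g : ℕ → ℝ := fun j => (-1 : ℝ) ^ j * (r.choose j : ℝ) * poch b j * poch (a + j + 1) (r + 1 - j) with hg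
    have hA2 : ∑ j ∈ Finset.range (r + 2), g j = ∑ j ∈ Finset.range (r + 1), g j := by
      rw [Finset.sum_range_succ]
      simp [hg, Nat.choose_succ_self]
    have hsplit : ∑ j ∈ Finset.range (r + 2), f j
        = (∑ j ∈ Finset.range (r + 1),
            (-1 : ℝ) ^ (j+1) * (r.choose j : ℝ) * poch b (j+1) * poch (a + j + 2) (r - j))
          + ∑ j ∈ Finset.range (r + 1), g j := by
      rw [Finset.sum_range_succ' f (r+1), ← hA2, Finset.sum_range_succ' g (r+1)]
      have hf0 : f 0 = g 0 := by simp [hf, hg]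
      rw [← hf0, ← add_assoc]
      congr 1
      rw [← Finset.sum_add_distrib]
      apply Finset.sum_congr rfl
      intro j hj
      have hc : ((r+1).choose (j+1) : ℝ) = (r.choose j : ℝ) + (r.choose (j+1) : ℝ) := by
        rw [Nat.choose_succ_succ]; push_cast; ring
      have harg : a + ((j+1 : ℕ):ℝ) + 1 = a + (j:ℝ) + 2 := by push_cast; ring
      have hsub : r + 1 - (j + 1) = r - j := by omega
      simp only [hf, hg, hc, harg, hsub]
      ring
    have key : ∀ j ∈ Finset.range (r+1),
        (-1 : ℝ) ^ (j+1) * (r.choose j : ℝ) * poch b (j+1) * poch (a + j + 2) (r - j) + g j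
        = (-1 : ℝ) ^ j * (r.choose j : ℝ) * poch b j *
          ((a + 1 - b) * poch ((a+1) + j + 1) (r - j)) := by
      intro j hj
      have hjr : j ≤ r := by simpa using Nat.lt_succ_iff.mp (Finset.mem_range.mp hj)
      have h1 : r + 1 - j = (r - j) + 1 := by omega
      have h2 : a + (j:ℝ) + 1 + 1 = a + (j:ℝ) + 2 := by ring
      have h3 : (a+1) + (j:ℝ) + 1 = a + (j:ℝ) + 2 := by ring
      simp only [hg, h1, poch_succ' (a + (j:ℝ) + 1) (r - j), poch_succ b j, h2, h3]
      ring
    calc ∑ j ∈ Finset.range (r + 2), f j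
        = ∑ j ∈ Finset.range (r + 1),
            ((-1 : ℝ) ^ (j+1) * (r.choose j : ℝ) * poch b (j+1) * poch (a + j + 2) (r - j) + g j) := by
          rw [hsplit, Finset.sum_add_distrib]
      _ = ∑ j ∈ Finset.range (r + 1),
            (-1 : ℝ) ^ j * (r.choose j : ℝ) * poch b j *
              ((a + 1 - b) * poch ((a+1) + j + 1) (r - j)) := Finset.sum_congr rfl key
      _ = (a + 1 - b) * ∑ j ∈ Finset.range (r + 1),
            (-1 : ℝ) ^ j * (r.choose j : ℝ) * poch b j * poch ((a+1) + j + 1) (r - j) := by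
          rw [Finset.mul_sum]; exact Finset.sum_congr rfl fun j _ => by ring
      _ = (a + 1 - b) * poch (a + 1 + 1 - b) r := by rw [ih (a+1) b]
      _ = poch (a + 1 - b) (r + 1) := by rw [poch_succ']; ring_nf

/-- Gamma shift. -/
lemma Gamma_shift (x : ℝ) (j : ℕ) (h : ∀ t : ℕ, t < j → x + t ≠ 0) :
    Real.Gamma (x + j) = Real.Gamma x * poch x j := by
  induction j with
  | zero => simp [poch]
  | succ j ih =>
    have h' : ∀ t : ℕ, t < j → x + t ≠ 0 := fun t ht => h t (by omega)
    have hxj : x + (j:ℝ) ≠ 0 := h j (by omega)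
    have : x + ((j+1 : ℕ):ℝ) = (x + j) + 1 := by push_cast; ring
    rw [this, Real.Gamma_add_one hxj, ih h', poch_succ]
    ring

/-- factorial-poch identity. -/
lemma factorial_poch (k r : ℕ) :
    (Nat.factorial k : ℝ) * poch ((k:ℝ) + 1) r = (Nat.factorial (k + r) : ℝ) := by
  induction r with
  | zero => simp [poch]
  | succ r ih =>
    rw [poch_succ, ← mul_assoc, ih]
    have : k + (r+1) = (k + r) + 1 := by omega
    rw [this, Nat.factorial_succ]
    push_cast; ring

lemma momFun_eq_sum (β : ℝ) (p : Polynomial ℝ) (k : ℤ) (N : ℕ) (hN : p.natDegree < N) :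
    momFun β p k = ∑ t ∈ Finset.range N, p.coeff t * Real.Gamma (β + t + k + 1) := by
  rw [momFun]
  apply Finset.sum_subset
  · intro t ht; rw [Finset.mem_range] at *; omega
  · intro t ht hnt
    rw [Finset.mem_range, not_lt] at hnt
    rw [p.coeff_eq_zero_of_natDegree_lt (by omega), zero_mul]

lemma momFun_smul (β : ℝ) (c : ℝ) (p : Polynomial ℝ) (k : ℤ) :
    momFun β (Polynomial.C c * p) k = c * momFun β p k := by
  rw [momFun_eq_sum β _ k (p.natDegree + 1)
      (by exact lt_of_le_of_lt (natDegree_C_mul_le c p) (Nat.lt_succ_self _)),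
    momFun, Finset.mul_sum]
  exact Finset.sum_congr rfl fun t _ => by rw [coeff_C_mul]; ring

lemma momFun_sum {ι : Type*} (β : ℝ) (s : Finset ι) (f : ι → Polynomial ℝ) (k : ℤ) (N : ℕ)
    (hN : ∀ i ∈ s, (f i).natDegree < N) :
    momFun β (∑ i ∈ s, f i) k = ∑ i ∈ s, momFun β (f i) k := by
  rcases s.eq_empty_or_nonempty with rfl | ⟨i0, hi0⟩
  · simp [momFun]
  · have hNpos : 0 < N := lt_of_le_of_lt (Nat.zero_le _) (hN i0 hi0)
    have hdeg : (∑ i ∈ s, f i).natDegree < N := by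
      have := Polynomial.natDegree_sum_le_of_forall_le s f (n := N - 1)
        (fun i hi => by have := hN i hi; omega)
      omega
    rw [momFun_eq_sum _ _ _ N hdeg]
    have : ∀ i ∈ s, momFun β (f i) k
        = ∑ t ∈ Finset.range N, (f i).coeff t * Real.Gamma (β + t + k + 1) :=
      fun i hi => momFun_eq_sum _ _ _ N (hN i hi)
    rw [Finset.sum_congr rfl this, Finset.sum_comm]
    apply Finset.sum_congr rfl
    intro t _
    rw [Polynomial.finset_sum_coeff, Finset.sum_mul]

lemma momFun_mul_Xpow (α : ℝ) (m : ℕ) (p : Polynomial ℝ) (i : ℕ) :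
    momFun (α - m) (p * Polynomial.X ^ i) 0 = momFun α p ((i : ℤ) - (m : ℤ)) := by
  set d := p.natDegree with hd
  have hdeg : (p * Polynomial.X ^ i).natDegree < i + (d + 1) := by
    have := Polynomial.natDegree_mul_le (p := p) (q := Polynomial.X ^ i)
    have h2 : (Polynomial.X ^ i : Polynomial ℝ).natDegree ≤ i := Polynomial.natDegree_X_pow_le i
    omega
  rw [momFun_eq_sum _ _ _ (i + (d + 1)) hdeg]
  rw [Finset.range_eq_Ico, ← Finset.sum_Ico_consecutive _ (Nat.zero_le i) (Nat.le_add_right i (d+1))]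
  have h1 : ∑ t ∈ Finset.Ico 0 i,
      (p * Polynomial.X ^ i).coeff t * Real.Gamma (α - m + t + ((0:ℤ):ℝ) + 1) = 0 := by
    apply Finset.sum_eq_zero
    intro t ht
    rw [Finset.mem_Ico] at ht
    rw [Polynomial.coeff_mul_X_pow', if_neg (by omega), zero_mul]
  rw [h1, zero_add, Finset.sum_Ico_eq_sum_range]
  have h2 : i + (d + 1) - i = d + 1 := by omega
  rw [h2, momFun]
  apply Finset.sum_congr rfl
  intro s _
  rw [Polynomial.coeff_mul_X_pow', if_pos (by omega)]
  have h3 : i + s - i = s := by omega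
  rw [h3]
  have h4 : α - (m:ℝ) + ((i + s : ℕ) : ℝ) + ((0:ℤ):ℝ) + 1 = α + (s:ℝ) + (((i:ℤ) - (m:ℤ) : ℤ):ℝ) + 1 := by
    push_cast; ring
  rw [h4]

lemma laguerre_natDegree_lt (α : ℝ) (n : ℕ) : (laguerre α n).natDegree < n + 1 := by
  have : (laguerre α n).natDegree ≤ n := by
    apply Polynomial.natDegree_sum_le_of_forall_le
    intro j hj
    refine le_trans (Polynomial.natDegree_C_mul_le _ _) ?_
    simpa [Polynomial.natDegree_X_pow] using Nat.lt_succ_iff.mp (Finset.mem_range.mp hj)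
  omega

lemma laguerre_coeff (α : ℝ) (n t : ℕ) (ht : t ≤ n) :
    (laguerre α n).coeff t = (-1 : ℝ) ^ t / (Nat.factorial t : ℝ) * genBinom α n t := by
  rw [laguerre, Polynomial.finset_sum_coeff]
  have : ∀ j ∈ Finset.range (n+1),
      (Polynomial.C ((-1 : ℝ) ^ j / (Nat.factorial j : ℝ) * genBinom α n j) * Polynomial.X ^ j).coeff t
      = if j = t then (-1 : ℝ) ^ j / (Nat.factorial j : ℝ) * genBinom α n j else 0 := by
    intro j _
    rw [Polynomial.coeff_C_mul, Polynomial.coeff_X_pow]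
    by_cases h : t = j
    · subst h; simp
    · simp [h, Ne.symm h]
  rw [Finset.sum_congr rfl this, Finset.sum_ite_eq' (Finset.range (n+1)) t]
  simp [Finset.mem_range, Nat.lt_succ_iff.mpr ht]

lemma genBinom_eq (α : ℝ) (r j : ℕ) (hj : j ≤ r) :
    genBinom α r j = poch (α + j + 1) (r - j) / (Nat.factorial (r - j) : ℝ) := by
  rw [genBinom]
  congr 1
  rw [Finset.prod_Ico_eq_prod_range]
  have h : r + 1 - (j + 1) = r - j := by omega
  rw [h, poch]
  apply Finset.prod_congr rfl
  intro t _
  push_cast; ring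

lemma laguerre_mom_gen (α b C0 : ℝ) (r : ℕ) (k : ℤ)
    (hΓ : ∀ j : ℕ, j ≤ r → Real.Gamma (α + j + k + 1) = C0 * poch b j) :
    momFun α (laguerre α r) k = C0 * poch (α + 1 - b) r / (Nat.factorial r : ℝ) := by
  rw [momFun_eq_sum α _ k (r+1) (laguerre_natDegree_lt α r)]
  have step : ∀ j ∈ Finset.range (r+1),
      (laguerre α r).coeff j * Real.Gamma (α + j + k + 1)
      = C0 / (Nat.factorial r : ℝ) *
          ((-1 : ℝ) ^ j * (r.choose j : ℝ) * poch b j * poch (α + j + 1) (r - j)) := by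
    intro j hj
    have hjr : j ≤ r := Nat.lt_succ_iff.mp (Finset.mem_range.mp hj)
    rw [laguerre_coeff α r j hjr, genBinom_eq α r j hjr, hΓ j hjr]
    have hcf : ((r.choose j : ℕ) : ℝ) * (Nat.factorial j : ℝ) * (Nat.factorial (r-j) : ℝ)
        = (Nat.factorial r : ℝ) := by
      rw_mod_cast [Nat.choose_mul_factorial_mul_factorial hjr]
    have h1 : (Nat.factorial j : ℝ) ≠ 0 := Nat.cast_ne_zero.mpr (Nat.factorial_ne_zero j)
    have h2 : (Nat.factorial (r-j) : ℝ) ≠ 0 := Nat.cast_ne_zero.mpr (Nat.factorial_ne_zero _)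
    have h3 : (Nat.factorial r : ℝ) ≠ 0 := Nat.cast_ne_zero.mpr (Nat.factorial_ne_zero r)
    field_simp
    linear_combination (-(poch b j * poch (α + (j:ℝ) + 1) (r - j) * C0)) * hcf
  rw [Finset.sum_congr rfl step, ← Finset.mul_sum, master r α b]
  ring

lemma laguerre_mom_nat (α : ℝ) (r k : ℕ) (hk : k < r)
    (hne : ∀ t : ℕ, α + 1 + t ≠ 0) :
    momFun α (laguerre α r) (k : ℤ) = 0 := by
  have hΓ : ∀ j : ℕ, j ≤ r → Real.Gamma (α + j + (k:ℤ) + 1)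
      = (Real.Gamma (α+1) * poch (α+1) k) * poch (α + k + 1) j := by
    intro j hj
    have harg : α + (j:ℝ) + ((k:ℤ):ℝ) + 1 = (α + 1) + ((k + j : ℕ):ℝ) := by push_cast; ring
    rw [harg, Gamma_shift (α+1) (k+j) (fun t _ => hne t), poch_add]
    have : α + 1 + (k:ℝ) = α + (k:ℝ) + 1 := by ring
    rw [this, mul_assoc]
  rw [laguerre_mom_gen α (α + (k:ℝ) + 1) _ r k hΓ]
  have h1 : poch (α + 1 - (α + (k:ℝ) + 1)) r = poch (-(k:ℝ)) r := by congr 1; ring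
  have h2 : poch (-(k:ℝ)) r = 0 := by
    apply Finset.prod_eq_zero (Finset.mem_range.mpr hk)
    push_cast; ring
  rw [h1, h2]
  ring

lemma laguerre_mom_neg (α : ℝ) (r l : ℕ)
    (hne : ∀ t : ℕ, t < r → α - l + t ≠ 0) :
    momFun α (laguerre α r) (-((l:ℤ)+1))
      = Real.Gamma (α - l) * poch ((l:ℝ)+1) r / (Nat.factorial r : ℝ) := by
  set k : ℤ := -((l:ℤ)+1) with hk
  have hΓ : ∀ j : ℕ, j ≤ r → Real.Gamma (α + j + (k:ℝ) + 1)
      = Real.Gamma (α - l) * poch (α - l) j := by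
    intro j hj
    have harg : α + (j:ℝ) + (k:ℝ) + 1 = (α - l) + (j:ℝ) := by rw [hk]; push_cast; ring
    rw [harg, Gamma_shift (α - l) j (fun t ht => hne t (lt_of_lt_of_le ht hj))]
  rw [laguerre_mom_gen α (α - l) _ r k hΓ]
  have h1 : poch (α + 1 - (α - l)) r = poch ((l:ℝ)+1) r := by congr 1; ring
  rw [h1]

/-- cofactor -/
noncomputable def cofac (m : ℕ) (R : Fin m → Polynomial ℝ) (n : ℕ) (j : Fin (m+1)) : ℝ :=
  (Matrix.of fun a b : Fin m =>
    (R a).eval ((n:ℝ) - ((j.succAbove b : Fin (m+1)) : ℕ))).det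

lemma laguerreZ_eq (α : ℝ) (n j : ℕ) (hj : j ≤ n) :
    laguerreZ α ((n:ℤ) - (j:ℕ)) = laguerre α (n - j) := by
  rw [laguerreZ, if_neg (by omega)]
  congr 1
  omega

lemma qpoly_expand (α : ℝ) (m : ℕ) (R : Fin m → Polynomial ℝ) (n : ℕ) (hn : m ≤ n) :
    qpoly α R (n : ℤ) = ∑ j : Fin (m+1),
      Polynomial.C ((-1:ℝ)^(j:ℕ) * cofac m R n j) * laguerre α (n - (j:ℕ)) := by
  rw [qpoly, Matrix.det_succ_row_zero]
  apply Finset.sum_congr rfl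
  intro j _
  have h0 : (Matrix.of fun i j : Fin (m + 1) =>
      if h : (i : ℕ) = 0 then laguerreZ α (n - (j : ℕ))
      else Polynomial.C ((R ⟨(i : ℕ) - 1, by have := i.isLt; omega⟩).eval ((((n:ℕ):ℤ) : ℝ) - ((j : ℕ) : ℝ)))) 0 j
      = laguerre α (n - (j:ℕ)) := by
    simp only [Matrix.of_apply, Fin.val_zero, dif_pos rfl]
    exact laguerreZ_eq α n j (le_trans (by omega) hn)
  rw [h0]
  have hsub : ((Matrix.of fun i j : Fin (m + 1) =>
      if h : (i : ℕ) = 0 then laguerreZ α (n - (j : ℕ))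
      else Polynomial.C ((R ⟨(i : ℕ) - 1, by have := i.isLt; omega⟩).eval ((((n:ℕ):ℤ) : ℝ) - ((j : ℕ) : ℝ)))).submatrix
        Fin.succ j.succAbove)
      = (Matrix.of fun a b : Fin m =>
          (R a).eval ((n:ℝ) - ((j.succAbove b : Fin (m+1)) : ℕ))).map (Polynomial.C) := by
    ext a b
    simp only [Matrix.submatrix_apply, Matrix.of_apply, Matrix.map_apply]
    rw [dif_neg (by simp [Fin.val_succ])]
    norm_num
  rw [hsub]
  have hmap : ((Matrix.of fun a b : Fin m =>
      (R a).eval ((n:ℝ) - ((j.succAbove b : Fin (m+1)) : ℕ))).map (Polynomial.C)).det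
      = Polynomial.C (cofac m R n j) := by
    rw [cofac, RingHom.map_det]
    rfl
  rw [hmap]
  rw [map_mul, map_pow, map_neg, map_one]
  ring

lemma cofac_row_sum (m : ℕ) (R : Fin m → Polynomial ℝ) (n : ℕ) (h : Fin m) :
    ∑ j : Fin (m+1), (-1:ℝ)^(j:ℕ) * (R h).eval ((n:ℝ) - (j:ℕ)) * cofac m R n j = 0 := by
  set B : Matrix (Fin (m+1)) (Fin (m+1)) ℝ := Matrix.of fun i j =>
      if hi : (i:ℕ) = 0 then (R h).eval ((n:ℝ) - (j:ℕ))
      else (R ⟨(i:ℕ)-1, by have := i.isLt; omega⟩).eval ((n:ℝ) - (j:ℕ)) with hB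
  have hidx : ∀ j : Fin (m+1), B h.succ j = (R h).eval ((n:ℝ) - (j:ℕ)) := by
    intro j
    simp only [hB, Matrix.of_apply]
    rw [dif_neg (by simp [Fin.val_succ])]
    congr 2
  have h0 : ∀ j : Fin (m+1), B 0 j = (R h).eval ((n:ℝ) - (j:ℕ)) := by
    intro j
    simp only [hB, Matrix.of_apply]
    rw [dif_pos (by simp)]
  have hrow : B 0 = B h.succ := funext fun j => by rw [h0 j, hidx j]
  have hdet : B.det = 0 :=
    Matrix.det_zero_of_row_eq (Fin.succ_ne_zero h).symm hrow
  rw [Matrix.det_succ_row_zero] at hdet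
  rw [← hdet]
  apply Finset.sum_congr rfl
  intro j _
  have hsub : (B.submatrix Fin.succ j.succAbove).det = cofac m R n j := by
    rw [cofac]
    congr 1
  rw [h0 j, hsub]

lemma eval0_iterate_deriv (i' i : ℕ) :
    Polynomial.eval 0 (Polynomial.derivative^[i'] (Polynomial.X ^ i : Polynomial ℝ))
      = if i' = i then (Nat.factorial i : ℝ) else 0 := by
  rw [Polynomial.iterate_derivative_X_pow_eq_C_mul, Polynomial.eval_mul, Polynomial.eval_C,
    Polynomial.eval_pow, Polynomial.eval_X]
  rcases lt_trichotomy i' i with h | h | h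
  · rw [if_neg (by omega), zero_pow (by omega), mul_zero]
  · subst h
    rw [if_pos rfl, Nat.sub_self, pow_zero, mul_one, Nat.descFactorial_self]
  · rw [if_neg (by omega), Nat.descFactorial_eq_zero_iff_lt.mpr h]
    simp

lemma binomPoly_eval (l r : ℕ) :
    (binomPoly l).eval ((r : ℕ) : ℝ) = poch ((l:ℝ) + 1) r / (Nat.factorial r : ℝ) := by
  rw [binomPoly, Polynomial.eval_mul, Polynomial.eval_C, Polynomial.eval_prod]
  have h1 : ∏ t ∈ Finset.range l, Polynomial.eval ((r:ℕ):ℝ) (Polynomial.X + Polynomial.C ((t:ℝ)+1))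
      = poch ((r:ℝ) + 1) l := by
    rw [poch]
    apply Finset.prod_congr rfl
    intro t _
    rw [Polynomial.eval_add, Polynomial.eval_X, Polynomial.eval_C]
    ring
  rw [h1]
  have h2 := factorial_poch l r
  have h3 := factorial_poch r l
  rw [Nat.add_comm r l] at h3
  have hl : (Nat.factorial l : ℝ) ≠ 0 := Nat.cast_ne_zero.mpr (Nat.factorial_ne_zero l)
  have hr : (Nat.factorial r : ℝ) ≠ 0 := Nat.cast_ne_zero.mpr (Nat.factorial_ne_zero r)
  field_simp
  linear_combination h3 - h2

/-- with no assumptions on the numbers `κ_i^g`, one has `⟨q_n, x^i⟩ = 0`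
for every `n ≥ m` and `0 ≤ i ≤ n−1`. -/
theorem statement6 (α : ℝ) (m : ℕ) (hm : 0 < m) (g : Fin m → ℕ) (hg : StrictMono g)
    (hgpos : ∀ i, 0 < g i) (R : Fin m → Polynomial ℝ)
    (hdeg : ∀ i, (R i).natDegree = g i)
    (hlead : ∀ i, (R i).leadingCoeff = 1 / (Nat.factorial (g i) : ℝ))
    (hα : ∀ k : ℕ, α - (Gmax g : ℝ) ≠ -(k : ℝ))
    (hΩ : ∀ n : ℕ, casoratian R (n : ℝ) ≠ 0)
    (w : Fin m → ℕ → ℝ)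
    (hw : ∀ h : Fin m, R h = ∑ l ∈ Finset.range (g h + 1), Polynomial.C (w h l) * binomPoly l)
    (κ : ℕ → Fin m → ℝ) :
    ∀ n : ℕ, m ≤ n → ∀ i : ℕ, i < n →
      bilin α g κ w (qpoly α R (n : ℤ)) (Polynomial.X ^ i) = 0 := by
  intro n hn i hi
  have hne1 : ∀ t : ℕ, α + 1 + (t:ℝ) ≠ 0 := by
    intro t h
    exact hα (Gmax g + 1 + t) (by push_cast; linarith)
  have hne2 : ∀ l : ℕ, l ≤ Gmax g → ∀ t : ℕ, α - l + t ≠ 0 := by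
    intro l hl t h
    apply hα (Gmax g - l + t)
    have hc : ((Gmax g - l + t : ℕ) : ℝ) = (Gmax g : ℝ) - l + t := by
      push_cast [Nat.cast_sub hl]; ring
    rw [hc]; linarith
  set p := qpoly α R (n : ℤ) with hp
  have hqm : ∀ k : ℤ, momFun α p k
      = ∑ j : Fin (m+1), ((-1:ℝ)^(j:ℕ) * cofac m R n j) * momFun α (laguerre α (n - (j:ℕ))) k := by
    intro k
    rw [hp, qpoly_expand α m R n hn,
      momFun_sum α Finset.univ _ k (n+1) (by
        intro j _
        have h1 := Polynomial.natDegree_C_mul_le ((-1:ℝ)^(j:ℕ) * cofac m R n j) (laguerre α (n - (j:ℕ)))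
        have h2 := laguerre_natDegree_lt α (n - (j:ℕ))
        omega)]
    exact Finset.sum_congr rfl fun j _ => momFun_smul _ _ _ _
  have hnat : ∀ k : ℕ, k < n - m → momFun α p (k : ℤ) = 0 := by
    intro k hk
    rw [hqm]
    apply Finset.sum_eq_zero
    intro j _
    rw [laguerre_mom_nat α (n - (j:ℕ)) k (by have := j.isLt; omega) hne1, mul_zero]
  have hKsum : ∀ h : Fin m, ∑ l ∈ Finset.range (g h + 1),
      poch (α - l) l * w h l * momFun α p (-((l:ℤ) + 1)) = 0 := by
    intro h
    have hstep : ∀ l ∈ Finset.range (g h + 1),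
        poch (α - l) l * w h l * momFun α p (-((l:ℤ)+1))
        = ∑ j : Fin (m+1), ((-1:ℝ)^(j:ℕ) * cofac m R n j) *
            (Real.Gamma α * (w h l * (binomPoly l).eval (((n - (j:ℕ) : ℕ)):ℝ))) := by
      intro l hl
      have hlG : l ≤ Gmax g :=
        le_trans (Nat.lt_succ_iff.mp (Finset.mem_range.mp hl)) (Finset.le_sup (Finset.mem_univ h))
      rw [hqm, Finset.mul_sum]
      apply Finset.sum_congr rfl
      intro j _
      rw [laguerre_mom_neg α (n - (j:ℕ)) l (fun t _ => hne2 l hlG t)]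
      have hGam : poch (α - l) l * Real.Gamma (α - l) = Real.Gamma α := by
        have hsh := Gamma_shift (α - l) l (fun t _ => hne2 l hlG t)
        have : α - (l:ℝ) + (l:ℝ) = α := by ring
        rw [this] at hsh
        rw [hsh]; ring
      rw [binomPoly_eval l (n - (j:ℕ))]
      calc poch (α - l) l * w h l *
            ((-1:ℝ)^(j:ℕ) * cofac m R n j *
              (Real.Gamma (α - l) * poch ((l:ℝ)+1) (n - (j:ℕ)) / (Nat.factorial (n - (j:ℕ)) : ℝ)))
          = (poch (α - l) l * Real.Gamma (α - l)) *
              ((-1:ℝ)^(j:ℕ) * cofac m R n j *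
                (w h l * (poch ((l:ℝ)+1) (n - (j:ℕ)) / (Nat.factorial (n - (j:ℕ)) : ℝ)))) := by ring
        _ = _ := by rw [hGam]; ring
    rw [Finset.sum_congr rfl hstep, Finset.sum_comm]
    have hRev : ∀ j : Fin (m+1),
        ∑ l ∈ Finset.range (g h + 1),
          ((-1:ℝ)^(j:ℕ) * cofac m R n j) *
            (Real.Gamma α * (w h l * (binomPoly l).eval (((n - (j:ℕ) : ℕ)):ℝ)))
        = Real.Gamma α * ((-1:ℝ)^(j:ℕ) * (R h).eval ((n:ℝ) - ((j:ℕ):ℝ)) * cofac m R n j) := by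
      intro j
      have hcast : (((n - (j:ℕ) : ℕ)):ℝ) = (n:ℝ) - ((j:ℕ):ℝ) := by
        have : (j:ℕ) ≤ n := by have := j.isLt; omega
        push_cast [Nat.cast_sub this]; ring
      have hR : (R h).eval ((n:ℝ) - ((j:ℕ):ℝ))
          = ∑ l ∈ Finset.range (g h + 1), w h l * (binomPoly l).eval ((n:ℝ) - ((j:ℕ):ℝ)) := by
        rw [hw h, Polynomial.eval_finset_sum]
        exact Finset.sum_congr rfl fun l _ => by rw [Polynomial.eval_mul, Polynomial.eval_C]
      rw [hR, Finset.mul_sum, Finset.sum_mul, Finset.mul_sum]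
      apply Finset.sum_congr rfl
      intro l _
      rw [hcast]
      ring
    rw [Finset.sum_congr rfl (fun j _ => hRev j), ← Finset.mul_sum,
      cofac_row_sum m R n h, mul_zero]
  -- now unfold bilin
  rw [bilin, hp, momFun_mul_Xpow α m (qpoly α R (n:ℤ)) i, ← hp]
  by_cases him : i < m
  · have hpick : ∑ i' ∈ Finset.range m,
        (Polynomial.eval 0 (Polynomial.derivative^[i'] ((Polynomial.X:Polynomial ℝ) ^ i)) / (Nat.factorial i' : ℝ)) *
          (∑ h : Fin m,
            (-(1 / (m : ℝ)) * momFun α p ((i' : ℤ) - (m : ℤ)) +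
              κ i' h * ∑ l ∈ Finset.range (g h + 1),
                poch (α - l) l * w h l * momFun α p (-((l : ℤ) + 1))))
        = - momFun α p ((i : ℤ) - (m : ℤ)) := by
      rw [Finset.sum_eq_single i]
      · rw [eval0_iterate_deriv i i, if_pos rfl, div_self (Nat.cast_ne_zero.mpr (Nat.factorial_ne_zero i)), one_mul]
        have hin : ∀ h : Fin m, (-(1 / (m : ℝ)) * momFun α p ((i : ℤ) - (m : ℤ)) +
            κ i h * ∑ l ∈ Finset.range (g h + 1),
              poch (α - l) l * w h l * momFun α p (-((l : ℤ) + 1)))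
            = -(1 / (m : ℝ)) * momFun α p ((i : ℤ) - (m : ℤ)) := by
          intro h
          rw [hKsum h, mul_zero, add_zero]
        rw [Finset.sum_congr rfl (fun h _ => hin h), Finset.sum_const, Finset.card_univ,
          Fintype.card_fin, nsmul_eq_mul]
        have hm0 : (m:ℝ) ≠ 0 := Nat.cast_ne_zero.mpr (by omega)
        field_simp
      · intro i' _ hne
        rw [eval0_iterate_deriv i' i, if_neg hne, zero_div, zero_mul]
      · intro hmem
        exact absurd (Finset.mem_range.mpr him) hmem
    rw [hpick]
    ring
  · have hzero : momFun α p ((i : ℤ) - (m : ℤ)) = 0 := by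
      have him' : m ≤ i := not_lt.mp him
      have : (i : ℤ) - (m : ℤ) = ((i - m : ℕ) : ℤ) := by omega
      rw [this]
      exact hnat (i - m) (by omega)
    rw [hzero]
    have hsum0 : ∑ i' ∈ Finset.range m,
        (Polynomial.eval 0 (Polynomial.derivative^[i'] ((Polynomial.X:Polynomial ℝ) ^ i)) / (Nat.factorial i' : ℝ)) *
          (∑ h : Fin m,
            (-(1 / (m : ℝ)) * momFun α p ((i' : ℤ) - (m : ℤ)) +
              κ i' h * ∑ l ∈ Finset.range (g h + 1),
                poch (α - l) l * w h l * momFun α p (-((l : ℤ) + 1))))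
        = 0 := by
      apply Finset.sum_eq_zero
      intro i' hi'
      have : i' ≠ i := by have := Finset.mem_range.mp hi'; omega
      rw [eval0_iterate_deriv i' i, if_neg this, zero_div, zero_mul]
    rw [hsum0]
    ring
end

section
/- Assume Ω_G(0) ≠ 0. Then for each i = 0,…,m−1 there exist real numbers κ_i^g (g ∈ G) such that Σ_{g∈G} κ_i^g·R_g(−j) = 0 for every j = 1,…,m−1−i, and Σ_{g∈G} κ_i^g·R_g(−m+i) ≠ 0. -/
open Polynomial Finset

/-- Lemma 2.1: if `Ω_G(0) ≠ 0`, then for each `i = 0,…,m−1` there exist numbers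
`κ_i^g` with `Σ_{g∈G} κ_i^g R_g(−j) = 0` for `j = 1,…,m−1−i` and `Σ_{g∈G} κ_i^g R_g(−m+i) ≠ 0`. -/
theorem statement12 (m : ℕ) (hm : 0 < m) (g : Fin m → ℕ) (hg : StrictMono g)
    (hgpos : ∀ i, 0 < g i) (R : Fin m → Polynomial ℝ)
    (hdeg : ∀ i, (R i).natDegree = g i)
    (hlead : ∀ i, (R i).leadingCoeff = 1 / (Nat.factorial (g i) : ℝ))
    (hΩ : casoratian R (0 : ℝ) ≠ 0) :
    ∀ i : ℕ, i < m → ∃ κ : Fin m → ℝ,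
      (∀ j : ℕ, 1 ≤ j → j + i + 1 ≤ m → ∑ h : Fin m, κ h * (R h).eval (-(j : ℝ)) = 0) ∧
        ∑ h : Fin m, κ h * (R h).eval (-(m : ℝ) + (i : ℝ)) ≠ 0 := by
  intro i hi
  set A : Matrix (Fin m) (Fin m) ℝ :=
    Matrix.of (fun h j : Fin m => (R h).eval (-(((j : ℕ) : ℝ) + 1))) with hA
  have hdet : A.det ≠ 0 := by
    have hcas : casoratian R 0 = A.det := by
      unfold casoratian
      congr 1
      ext l j
      simp [hA, zero_sub]
    rwa [hcas] at hΩ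
  set k : Fin m := ⟨m - i - 1, by omega⟩ with hk
  refine ⟨Matrix.vecMul (Pi.single k 1) A⁻¹, ?_, ?_⟩
  · intro j hj1 hj2
    set j' : Fin m := ⟨j - 1, by omega⟩ with hj'
    have h1 : ∑ h : Fin m, (Matrix.vecMul (Pi.single k 1) A⁻¹) h * (R h).eval (-(j : ℝ)) =
        (Matrix.vecMul (Matrix.vecMul (Pi.single k 1) A⁻¹) A) j' := by
      rw [Matrix.vecMul, dotProduct]
      refine Finset.sum_congr rfl fun h _ => ?_
      have : A h j' = (R h).eval (-(j : ℝ)) := by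
        simp only [hA, Matrix.of_apply, hj']
        congr 2
        have : ((j - 1 : ℕ) : ℝ) = (j : ℝ) - 1 := by
          have : (1 : ℕ) ≤ j := hj1
          push_cast [this]; ring
        rw [this]; ring
      rw [this]
    rw [h1, Matrix.vecMul_vecMul, Matrix.nonsing_inv_mul A (isUnit_iff_ne_zero.mpr hdet),
      Matrix.vecMul_one]
    have hne : j' ≠ k := by
      simp only [hj', hk, Ne, Fin.mk.injEq]
      omega
    simp [Pi.single_eq_of_ne hne]
  · have h1 : ∑ h : Fin m, (Matrix.vecMul (Pi.single k 1) A⁻¹) h * (R h).eval (-(m : ℝ) + (i : ℝ)) =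
        (Matrix.vecMul (Matrix.vecMul (Pi.single k 1) A⁻¹) A) k := by
      rw [Matrix.vecMul, dotProduct]
      refine Finset.sum_congr rfl fun h _ => ?_
      have : A h k = (R h).eval (-(m : ℝ) + (i : ℝ)) := by
        simp only [hA, Matrix.of_apply, hk]
        congr 2
        have h2 : ((m - i - 1 : ℕ) : ℝ) = (m : ℝ) - (i : ℝ) - 1 := by
          have hmi : (m - i - 1) + (i + 1) = m := by omega
          have h3 := congrArg (Nat.cast : ℕ → ℝ) hmi
          push_cast at h3
          linarith
        rw [h2]; ring
      rw [this]
    rw [h1, Matrix.vecMul_vecMul, Matrix.nonsing_inv_mul A (isUnit_iff_ne_zero.mpr hdet),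
      Matrix.vecMul_one]
    simp
end

section
/- Assume Ω_G(n) ≠ 0 for every integer n ≥ 0. Then for every n ≥ 0 the function q_n is a polynomial in x of degree exactly n, with leading coefficient (−1)^n·Ω_G(n)/n!. -/
open Polynomial Finset

lemma laguerre_coeff_self (α : ℝ) (n : ℕ) :
    (laguerre α n).coeff n = (-1 : ℝ) ^ n / (Nat.factorial n : ℝ) := by
  unfold laguerre
  rw [Polynomial.finset_sum_coeff]
  simp only [Polynomial.coeff_C_mul, Polynomial.coeff_X_pow]
  rw [Finset.sum_eq_single n]
  · simp [genBinom]
  · intro j hj hne; simp [Ne.symm hne]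
  · intro h; simp at h

lemma laguerre_degree_le (α : ℝ) (n : ℕ) : (laguerre α n).degree ≤ n := by
  refine (Polynomial.degree_sum_le _ _).trans ?_
  apply Finset.sup_le
  intro j hj
  calc (Polynomial.C ((-1 : ℝ) ^ j / (Nat.factorial j : ℝ) * genBinom α n j) *
        Polynomial.X ^ j).degree
      ≤ _ + _ := Polynomial.degree_mul_le _ _
    _ ≤ 0 + (j : WithBot ℕ) :=
        add_le_add Polynomial.degree_C_le (le_of_eq (Polynomial.degree_X_pow j))
    _ = (j : WithBot ℕ) := zero_add _
    _ ≤ (n : WithBot ℕ) := by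
        exact_mod_cast Nat.lt_succ_iff.mp (Finset.mem_range.mp hj)

/-- for every `n ≥ 0`, `q_n` is a polynomial of degree exactly `n` with leading
coefficient `(−1)^n·Ω_G(n)/n!`. -/
theorem statement13 (α : ℝ) (m : ℕ) (hm : 0 < m) (g : Fin m → ℕ) (hg : StrictMono g)
    (hgpos : ∀ i, 0 < g i) (R : Fin m → Polynomial ℝ)
    (hdeg : ∀ i, (R i).natDegree = g i)
    (hlead : ∀ i, (R i).leadingCoeff = 1 / (Nat.factorial (g i) : ℝ))
    (hΩ : ∀ n : ℕ, casoratian R (n : ℝ) ≠ 0) :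
    ∀ n : ℕ, (qpoly α R (n : ℤ)).degree = (n : ℕ) ∧
      (qpoly α R (n : ℤ)).coeff n = (-1 : ℝ) ^ n * casoratian R (n : ℝ) / (Nat.factorial n : ℝ) := by
  intro n
  set M : Matrix (Fin (m + 1)) (Fin (m + 1)) (Polynomial ℝ) :=
    Matrix.of fun i j : Fin (m + 1) =>
      if h : (i : ℕ) = 0 then laguerreZ α ((n : ℤ) - (j : ℕ))
      else Polynomial.C ((R ⟨(i : ℕ) - 1, by have := i.isLt; omega⟩).eval
        ((n : ℝ) - ((j : ℕ) : ℝ))) with hM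
  have hsub : ∀ j : Fin (m + 1),
      (M.submatrix Fin.succ j.succAbove).det =
        Polynomial.C (Matrix.det (Matrix.of fun l k : Fin m =>
          (R l).eval ((n : ℝ) - ((j.succAbove k : ℕ) : ℝ)))) := by
    intro j
    rw [RingHom.map_det]
    congr 1
  have hrow : ∀ j : Fin (m + 1), M 0 j = laguerreZ α ((n : ℤ) - (j : ℕ)) := by
    intro j; simp [hM]
  have hq : qpoly α R (n : ℤ) =
      Polynomial.C (casoratian R (n : ℝ)) * laguerre α n +
      ∑ j : Fin m, (-1 : Polynomial ℝ) ^ ((j : ℕ) + 1) *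
        laguerreZ α ((n : ℤ) - ((j : ℕ) + 1)) *
        Polynomial.C (Matrix.det (Matrix.of fun l k : Fin m =>
          (R l).eval ((n : ℝ) - (((Fin.succ j).succAbove k : ℕ) : ℝ)))) := by
    show M.det = _
    rw [Matrix.det_succ_row_zero, Fin.sum_univ_succ]
    refine congrArg₂ HAdd.hAdd ?_ ?_
    · rw [hrow, hsub]
      have h0 : laguerreZ α ((n : ℤ) - ((0 : Fin (m + 1)) : ℕ)) = laguerre α n := by
        simp [laguerreZ]
      rw [h0]
      have hcas : (Matrix.det (Matrix.of fun l k : Fin m =>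
          (R l).eval ((n : ℝ) - (((0 : Fin (m + 1)).succAbove k : ℕ) : ℝ)))) =
          casoratian R (n : ℝ) := by
        unfold casoratian
        congr 1
        ext l k
        simp [Fin.succAbove, Fin.val_succ]
      rw [hcas]
      simp [mul_comm]
    · apply Finset.sum_congr rfl
      intro j _
      rw [hrow, hsub]
      simp [Fin.val_succ]
  -- the tail sum has degree < n
  set S : Polynomial ℝ := ∑ j : Fin m, (-1 : Polynomial ℝ) ^ ((j : ℕ) + 1) *
      laguerreZ α ((n : ℤ) - ((j : ℕ) + 1)) *
      Polynomial.C (Matrix.det (Matrix.of fun l k : Fin m =>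
        (R l).eval ((n : ℝ) - (((Fin.succ j).succAbove k : ℕ) : ℝ)))) with hS
  have hSdeg : S.degree < (n : WithBot ℕ) := by
    rw [hS]
    refine lt_of_le_of_lt (Polynomial.degree_sum_le _ _) ?_
    rw [Finset.sup_lt_iff (by exact_mod_cast WithBot.bot_lt_coe n)]
    intro j _
    by_cases hneg : (n : ℤ) - ((j : ℕ) + 1) < 0
    · rw [laguerreZ, if_pos hneg]
      simpa using (by exact_mod_cast WithBot.bot_lt_coe n : (⊥ : WithBot ℕ) < (n : WithBot ℕ))
    · rw [laguerreZ, if_neg hneg]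
      have hlt : ((n : ℤ) - ((j : ℕ) + 1)).toNat < n := by omega
      calc ((-1 : Polynomial ℝ) ^ ((j : ℕ) + 1) *
            laguerre α ((n : ℤ) - ((j : ℕ) + 1)).toNat * _).degree
          ≤ _ + _ := Polynomial.degree_mul_le _ _
        _ ≤ _ + _ + _ := add_le_add (Polynomial.degree_mul_le _ _) le_rfl
        _ ≤ 0 + (((n : ℤ) - ((j : ℕ) + 1)).toNat : WithBot ℕ) + 0 := by
            refine add_le_add (add_le_add ?_ (laguerre_degree_le _ _)) Polynomial.degree_C_le
            calc ((-1 : Polynomial ℝ) ^ ((j : ℕ) + 1)).degree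
                = ((Polynomial.C (-1 : ℝ)) ^ ((j : ℕ) + 1)).degree := by simp
              _ ≤ 0 := by rw [← Polynomial.C_pow]; exact Polynomial.degree_C_le
        _ = (((n : ℤ) - ((j : ℕ) + 1)).toNat : WithBot ℕ) := by
            rw [zero_add, add_zero]
        _ < (n : WithBot ℕ) := by exact_mod_cast hlt
  -- head term
  set P : Polynomial ℝ := Polynomial.C (casoratian R (n : ℝ)) * laguerre α n with hP
  have hPcoeff : P.coeff n = casoratian R (n : ℝ) * ((-1 : ℝ) ^ n / (Nat.factorial n : ℝ)) := by
    rw [hP, Polynomial.coeff_C_mul, laguerre_coeff_self]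
  have hPcoeff_ne : P.coeff n ≠ 0 := by
    rw [hPcoeff]
    apply mul_ne_zero (hΩ n)
    positivity
  have hPdeg : P.degree = (n : WithBot ℕ) := by
    refine le_antisymm ?_ (Polynomial.le_degree_of_ne_zero hPcoeff_ne)
    calc P.degree ≤ _ + _ := Polynomial.degree_mul_le _ _
      _ ≤ 0 + (n : WithBot ℕ) := add_le_add Polynomial.degree_C_le (laguerre_degree_le α n)
      _ = (n : WithBot ℕ) := zero_add _
  have hdegq : (qpoly α R (n : ℤ)).degree = (n : WithBot ℕ) := by
    rw [hq, Polynomial.degree_add_eq_left_of_degree_lt (by rw [hPdeg]; exact hSdeg), hPdeg]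
  refine ⟨hdegq, ?_⟩
  rw [hq, Polynomial.coeff_add, Polynomial.coeff_eq_zero_of_degree_lt hSdeg, add_zero, hPcoeff]
  ring
end

section
/- Let p_1, …, p_s be nonzero real polynomials and let Φ(x) = det(p_i(x−j))_{i=1,…,s; j=0,…,s−1} be their Casoratian. If the degrees deg p_1, …, deg p_s are pairwise distinct, then Φ is a nonzero polynomial of degree exactly Σ_{i=1}^{s} deg p_i − s(s−1)/2. If the degrees are not pairwise distinct, then either Φ = 0 or deg Φ < Σ_{i=1}^{s} deg p_i − s(s−1)/2. -/
open Polynomial Finset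

/-- The Casoratian `Φ(x) = det(p_i(x−j))_{i=1,…,s; j=0,…,s−1}` as a polynomial. -/
noncomputable def casPoly {s : ℕ} (p : Fin s → Polynomial ℝ) : Polynomial ℝ :=
  Matrix.det (Matrix.of fun i j : Fin s =>
    (p i).comp (Polynomial.X - Polynomial.C ((j : ℕ) : ℝ)))

namespace Cas16

/-- forward-ish finite difference: `(fd q)(x) = q(x) - q(x-1)`. -/
noncomputable def fd (q : Polynomial ℝ) : Polynomial ℝ := q - taylor (-1) q

lemma fd_zero : fd 0 = 0 := by simp [fd]

lemma hasse_top {q : Polynomial ℝ} {d : ℕ} (h : q.natDegree ≤ d) :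
    hasseDeriv d q = C (q.coeff d) := by
  ext n
  rw [hasseDeriv_coeff, coeff_C]
  rcases Nat.eq_zero_or_pos n with hn | hn
  · simp [hn]
  · have : q.coeff (n + d) = 0 := coeff_eq_zero_of_natDegree_lt (by omega)
    simp [this, hn.ne']

lemma fd_coeff_eq_zero {q : Polynomial ℝ} {d : ℕ} (h : q.natDegree ≤ d) :
    ∀ k, d ≤ k → (fd q).coeff k = 0 := by
  intro k hk
  rw [fd, coeff_sub, taylor_coeff]
  rcases eq_or_lt_of_le hk with rfl | hlt
  · rw [hasse_top h, eval_C, sub_self]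
  · have h1 : q.coeff k = 0 := coeff_eq_zero_of_natDegree_lt (by omega)
    have h2 : hasseDeriv k q = 0 :=
      hasseDeriv_eq_zero_of_lt_natDegree q k (by omega)
    simp [h1, h2]

lemma fd_natDegree_le {q : Polynomial ℝ} {d e : ℕ} (h : q.natDegree ≤ d) (hd : d = e + 1) :
    (fd q).natDegree ≤ e :=
  natDegree_le_iff_coeff_eq_zero.mpr fun N hN => fd_coeff_eq_zero h N (by omega)

lemma fd_coeff_top {q : Polynomial ℝ} {d e : ℕ} (h : q.natDegree ≤ d) (hd : d = e + 1) :
    (fd q).coeff e = (d : ℝ) * q.coeff d := by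
  rw [fd, coeff_sub, taylor_coeff]
  have hdeg : (hasseDeriv e q).natDegree < 2 := by
    have := natDegree_hasseDeriv_le q e
    omega
  rw [eval_eq_sum_range' hdeg]
  have c0 : (hasseDeriv e q).coeff 0 = q.coeff e := by
    rw [hasseDeriv_coeff]; simp
  have c1 : (hasseDeriv e q).coeff 1 = (d : ℝ) * q.coeff d := by
    rw [hasseDeriv_coeff]
    have : 1 + e = d := by omega
    rw [this]
    have : d.choose e = d := by
      subst hd; exact Nat.choose_succ_self_right e
    rw [this]
  rw [Finset.sum_range_succ, Finset.sum_range_one, c0, c1]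
  ring

lemma fdIter_coeff_eq_zero :
    ∀ (j : ℕ) (q : Polynomial ℝ) (d : ℕ), q.natDegree ≤ d →
      ∀ k : ℕ, (d : ℤ) < (k : ℤ) + (j : ℤ) → (fd^[j] q).coeff k = 0 := by
  intro j
  induction j with
  | zero =>
    intro q d h k hk
    rw [Function.iterate_zero_apply]
    exact coeff_eq_zero_of_natDegree_lt (by push_cast at hk; omega)
  | succ j ih =>
    intro q d h k hk
    rw [Function.iterate_succ_apply]
    rcases Nat.eq_zero_or_pos d with rfl | hd
    · have hq : fd q = 0 := by
        ext m; exact fd_coeff_eq_zero h m (Nat.zero_le m)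
      rw [hq, Function.iterate_fixed fd_zero, coeff_zero]
    · obtain ⟨e, rfl⟩ : ∃ e, d = e + 1 := ⟨d - 1, by omega⟩
      exact ih (fd q) e (fd_natDegree_le h rfl) k (by push_cast at hk ⊢; omega)

lemma fdIter_coeff_top :
    ∀ (j : ℕ) (q : Polynomial ℝ) (d : ℕ), q.natDegree ≤ d →
      ∀ k : ℕ, (k : ℤ) + (j : ℤ) = (d : ℤ) →
        (fd^[j] q).coeff k = q.coeff d * ∏ t ∈ Finset.range j, ((d : ℝ) - (t : ℝ)) := by
  intro j
  induction j with
  | zero =>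
    intro q d h k hk
    have : k = d := by omega
    subst this; simp
  | succ j ih =>
    intro q d h k hk
    obtain ⟨e, rfl⟩ : ∃ e, d = e + 1 := ⟨d - 1, by omega⟩
    rw [Function.iterate_succ_apply]
    rw [ih (fd q) e (fd_natDegree_le h rfl) k (by push_cast at hk ⊢; omega)]
    rw [fd_coeff_top h rfl, Finset.prod_range_succ']
    push_cast
    rw [Finset.prod_congr rfl
      (fun x _ => by ring : ∀ x ∈ Finset.range j, (e:ℝ) + 1 - ((x:ℝ)+1) = (e:ℝ) - x)]
    ring


lemma fd_linear_comb {ι : Type*} (t : Finset ι) (c : ι → ℝ) (f : ι → Polynomial ℝ) :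
    fd (∑ k ∈ t, c k • f k) = ∑ k ∈ t, c k • (f k - taylor (-1) (f k)) := by
  simp only [fd, map_sum, LinearMap.map_smul, smul_sub, Finset.sum_sub_distrib]

lemma fd_iter_eq_sum (j : ℕ) (q : Polynomial ℝ) :
    fd^[j] q = ∑ k ∈ Finset.range (j + 1),
      ((-1 : ℝ) ^ k * ((j.choose k : ℕ) : ℝ)) • taylor (-(k : ℝ)) q := by
  induction j with
  | zero => simp
  | succ j ih =>
    rw [Function.iterate_succ_apply', ih, fd_linear_comb]
    have key : ∀ k : ℕ,
        taylor (-1 : ℝ) (taylor (-(k : ℝ)) q) = taylor (-((k:ℝ) + 1)) q := by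
      intro k
      rw [taylor_taylor]
      ring_nf
    simp only [key, smul_sub, Finset.sum_sub_distrib]
    rw [Finset.sum_range_succ' (fun k => ((-1:ℝ)^k * ((j+1).choose k : ℝ)) • taylor (-(k:ℝ)) q) (j+1)]
    rw [Finset.sum_range_succ' (fun k => ((-1:ℝ)^k * ((j).choose k : ℝ)) • taylor (-(k:ℝ)) q) j]
    have hlast : ∀ m : ℕ, (∑ k ∈ Finset.range (j+1),
        ((-1:ℝ)^k * ((m.choose k : ℕ) : ℝ)) • taylor (-((k:ℝ)+1)) q)
        = ∑ k ∈ Finset.range (j+1),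
        ((-1:ℝ)^k * ((m.choose k : ℕ) : ℝ)) • taylor (-(((k+1:ℕ) :ℝ))) q := by
      intro m
      refine Finset.sum_congr rfl fun k _ => ?_
      push_cast; ring_nf
    rw [hlast]
    rw [show ((-1:ℝ)^0 * (((j+1).choose 0 : ℕ):ℝ)) • taylor (-((0:ℕ):ℝ)) q
        = ((-1:ℝ)^0 * (((j).choose 0 : ℕ):ℝ)) • taylor (-((0:ℕ):ℝ)) q by norm_num]
    have hA : ∑ k ∈ Finset.range j, ((-1:ℝ)^(k+1) * ((j.choose (k+1) : ℕ):ℝ)) • taylor (-(((k+1:ℕ)):ℝ)) q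
        = ∑ k ∈ Finset.range (j+1), ((-1:ℝ)^(k+1) * ((j.choose (k+1) : ℕ):ℝ)) • taylor (-(((k+1:ℕ)):ℝ)) q := by
      rw [Finset.sum_range_succ, Nat.choose_succ_self]
      simp
    rw [hA, add_sub_right_comm]
    congr 1
    rw [← Finset.sum_sub_distrib]
    refine Finset.sum_congr rfl fun k hk => ?_
    rw [← sub_smul]
    congr 1
    rw [Nat.choose_succ_succ j k]
    push_cast
    ring


lemma coeff_prod' {ι : Type*} (t : Finset ι) (f : ι → Polynomial ℝ) (n : ι → ℕ)
    (h : ∀ i ∈ t, (f i).natDegree ≤ n i) :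
    (∏ i ∈ t, f i).coeff (∑ i ∈ t, n i) = ∏ i ∈ t, (f i).coeff (n i) := by
  induction t using Finset.cons_induction with
  | empty => simp
  | cons a t ha ih =>
    rw [Finset.prod_cons, Finset.sum_cons, Finset.prod_cons]
    rw [coeff_mul_add_eq_of_natDegree_le (h a (Finset.mem_cons_self a t))
      ((natDegree_prod_le t f).trans (Finset.sum_le_sum fun i hi => h i (Finset.mem_cons_of_mem hi)))]
    rw [ih fun i hi => h i (Finset.mem_cons_of_mem hi)]

lemma sum_range_le_of_card (n : ℕ) :
    ∀ (T : Finset ℕ), T.card = n → ∑ i ∈ Finset.range n, i ≤ ∑ x ∈ T, x := by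
  induction n with
  | zero => intro T h; simp
  | succ n ih =>
    intro T h
    have hne : T.Nonempty := Finset.card_pos.mp (by omega)
    set m := T.max' hne with hm
    have hmem : m ∈ T := T.max'_mem hne
    have hsub : T ⊆ Finset.Iic m := fun x hx => Finset.mem_Iic.mpr (T.le_max' x hx)
    have hcard : n + 1 ≤ m + 1 := by
      calc n + 1 = T.card := h.symm
        _ ≤ (Finset.Iic m).card := Finset.card_le_card hsub
        _ = m + 1 := by simp
    have herase : (T.erase m).card = n := by
      rw [Finset.card_erase_of_mem hmem, h]
      omega
    calc ∑ i ∈ Finset.range (n+1), i = (∑ i ∈ Finset.range n, i) + n := Finset.sum_range_succ _ n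
      _ ≤ (∑ x ∈ T.erase m, x) + m := by
          have := ih (T.erase m) herase
          omega
      _ = ∑ x ∈ T, x := Finset.sum_erase_add T _ hmem

lemma choose_two_le_sum {s : ℕ} {f : Fin s → ℕ} (hf : Function.Injective f) :
    (s.choose 2 : ℤ) ≤ ∑ i : Fin s, (f i : ℤ) := by
  have himg : (Finset.univ.image f).card = s := by
    rw [Finset.card_image_of_injective _ hf, Finset.card_univ, Fintype.card_fin]
  have h1 : ∑ i ∈ Finset.range s, i ≤ ∑ x ∈ Finset.univ.image f, x :=
    sum_range_le_of_card s _ himg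
  rw [Finset.sum_image (fun i _ j _ h => hf h)] at h1
  have h2 : ∑ i ∈ Finset.range s, i = s.choose 2 := by
    rw [Finset.sum_range_id, Nat.choose_two_right]
  rw [h2] at h1
  calc (s.choose 2 : ℤ) ≤ ((∑ i : Fin s, f i : ℕ) : ℤ) := by exact_mod_cast h1
    _ = ∑ i : Fin s, (f i : ℤ) := by push_cast; rfl


variable {s : ℕ}

/-- The matrix of shifted polynomials. -/
noncomputable def Mmat (p : Fin s → Polynomial ℝ) : Matrix (Fin s) (Fin s) (Polynomial ℝ) :=
  Matrix.of fun i j => taylor (-((j : ℕ) : ℝ)) (p i)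

/-- Binomial upper-triangular matrix. -/
noncomputable def Amat (s : ℕ) : Matrix (Fin s) (Fin s) (Polynomial ℝ) :=
  Matrix.of fun k j => C ((-1 : ℝ) ^ (k : ℕ) * (((j : ℕ).choose k : ℕ) : ℝ))

/-- The finite-difference matrix. -/
noncomputable def Dmat (p : Fin s → Polynomial ℝ) : Matrix (Fin s) (Fin s) (Polynomial ℝ) :=
  Matrix.of fun i j => fd^[(j : ℕ)] (p i)

lemma mul_eq (p : Fin s → Polynomial ℝ) : Mmat p * Amat s = Dmat p := by
  apply Matrix.ext
  intro i j
  rw [Matrix.mul_apply]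
  simp only [Mmat, Amat, Dmat, Matrix.of_apply]
  rw [fd_iter_eq_sum]
  rw [Fin.sum_univ_eq_sum_range
    (fun k => taylor (-((k:ℕ):ℝ)) (p i) * C ((-1:ℝ)^(k:ℕ) * (((j:ℕ).choose k : ℕ):ℝ))) s]
  rw [← Finset.sum_subset (Finset.range_subset_range.mpr (Nat.succ_le_of_lt j.isLt))
    (fun k _ hk => by
      have : (j:ℕ) < k := by simpa using hk
      rw [Nat.choose_eq_zero_of_lt this]
      simp)]
  refine Finset.sum_congr rfl fun k _ => ?_
  rw [smul_eq_C_mul, mul_comm]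

lemma detA : (Amat s).det = C (∏ k : Fin s, (-1 : ℝ) ^ (k : ℕ)) := by
  rw [Matrix.det_of_upperTriangular (M := Amat s)
    (fun i j hij => by
      show C _ = 0
      rw [Nat.choose_eq_zero_of_lt (by exact_mod_cast hij)]
      simp)]
  rw [map_prod]
  refine Finset.prod_congr rfl fun k _ => ?_
  show C ((-1:ℝ)^(k:ℕ) * (((k:ℕ).choose k : ℕ):ℝ)) = _
  rw [Nat.choose_self]
  simp

lemma casPoly_eq_det (p : Fin s → Polynomial ℝ) : casPoly p = (Mmat p).det := by
  unfold casPoly Mmat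
  congr 1
  apply Matrix.ext
  intro i j
  rw [Matrix.of_apply, Matrix.of_apply, taylor_apply, map_neg, ← sub_eq_add_neg]

lemma dmat_det_eq (p : Fin s → Polynomial ℝ) :
    (Dmat p).det = casPoly p * C (∏ k : Fin s, (-1 : ℝ) ^ (k : ℕ)) := by
  rw [← mul_eq, Matrix.det_mul, detA, casPoly_eq_det]


lemma sum_fin_coe (s : ℕ) : (∑ i : Fin s, ((i : ℕ) : ℤ)) = (s.choose 2 : ℤ) := by
  have h : (∑ i : Fin s, (i : ℕ)) = s.choose 2 := by
    rw [Fin.sum_univ_eq_sum_range (fun i => i) s, Finset.sum_range_id, Nat.choose_two_right]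
  exact_mod_cast h

lemma dmat_entry_zero (p : Fin s → Polynomial ℝ) {i j : Fin s}
    (h : (p i).natDegree < (j : ℕ)) : Dmat p i j = 0 := by
  ext m
  rw [Dmat, Matrix.of_apply]
  exact fdIter_coeff_eq_zero _ _ _ le_rfl m (by push_cast; omega)

lemma dmat_entry_natDegree_le (p : Fin s → Polynomial ℝ) (i j : Fin s) :
    (Dmat p i j).natDegree ≤ (p i).natDegree - (j : ℕ) := by
  refine natDegree_le_iff_coeff_eq_zero.mpr fun N hN => ?_
  rw [Dmat, Matrix.of_apply]
  refine fdIter_coeff_eq_zero _ _ _ le_rfl N (by push_cast; omega)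

lemma psi_coeff_zero (p : Fin s → Polynomial ℝ) (k : ℕ)
    (hk : (∑ i : Fin s, ((p i).natDegree : ℤ)) - (s.choose 2 : ℤ) < (k : ℤ)) :
    ((Dmat p).det).coeff k = 0 := by
  rw [Matrix.det_apply, finset_sum_coeff]
  refine Finset.sum_eq_zero fun σ _ => ?_
  rw [Polynomial.coeff_smul]
  by_cases hσ : ∀ i : Fin s, (i : ℕ) ≤ (p (σ i)).natDegree
  · have hnd : ((∏ i, Dmat p (σ i) i).natDegree : ℤ) ≤
        (∑ i : Fin s, ((p i).natDegree : ℤ)) - (s.choose 2 : ℤ) := by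
      have h1 : (∏ i, Dmat p (σ i) i).natDegree ≤
          ∑ i : Fin s, ((p (σ i)).natDegree - (i : ℕ)) :=
        (natDegree_prod_le _ _).trans
          (Finset.sum_le_sum fun i _ => dmat_entry_natDegree_le p (σ i) i)
      have h2 : ((∑ i : Fin s, ((p (σ i)).natDegree - (i : ℕ)) : ℕ) : ℤ) =
          (∑ i : Fin s, ((p i).natDegree : ℤ)) - (s.choose 2 : ℤ) := by
        push_cast
        rw [Finset.sum_congr rfl (fun i _ => by
          have := hσ i
          push_cast
          omega : ∀ i ∈ (Finset.univ : Finset (Fin s)),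
            (((p (σ i)).natDegree - (i : ℕ) : ℕ) : ℤ) =
              ((p (σ i)).natDegree : ℤ) - ((i : ℕ) : ℤ))]
        rw [Finset.sum_sub_distrib, sum_fin_coe]
        congr 1
        exact Equiv.sum_comp σ (fun i => ((p i).natDegree : ℤ))
      calc ((∏ i, Dmat p (σ i) i).natDegree : ℤ) ≤
          ((∑ i : Fin s, ((p (σ i)).natDegree - (i : ℕ)) : ℕ) : ℤ) := by exact_mod_cast h1
        _ = _ := h2
    rw [coeff_eq_zero_of_natDegree_lt (by omega), smul_zero]
  · push_neg at hσ
    obtain ⟨i, hi⟩ := hσ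
    have hz : (∏ j : Fin s, Dmat p (σ j) j) = 0 :=
      Finset.prod_eq_zero (Finset.mem_univ i) (dmat_entry_zero p hi)
    rw [hz, coeff_zero, smul_zero]

lemma psi_coeff_top (p : Fin s → Polynomial ℝ) (K : ℕ)
    (hK : (K : ℤ) = (∑ i : Fin s, ((p i).natDegree : ℤ)) - (s.choose 2 : ℤ)) :
    ((Dmat p).det).coeff K =
      (∏ i, (p i).leadingCoeff) *
        (Matrix.vandermonde fun i : Fin s => (((p i).natDegree : ℕ) : ℝ)).det := by
  have main : ((Dmat p).det).coeff K = (Matrix.of fun i j : Fin s =>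
      (p i).leadingCoeff * ∏ t ∈ Finset.range (j : ℕ), (((p i).natDegree : ℝ) - (t : ℝ))).det := by
    rw [Matrix.det_apply, Matrix.det_apply, finset_sum_coeff]
    refine Finset.sum_congr rfl fun σ _ => ?_
    rw [Polynomial.coeff_smul]
    congr 1
    by_cases hσ : ∀ i : Fin s, (i : ℕ) ≤ (p (σ i)).natDegree
    · have hsum : ∑ i : Fin s, ((p (σ i)).natDegree - (i : ℕ)) = K := by
        have h2 : ((∑ i : Fin s, ((p (σ i)).natDegree - (i : ℕ)) : ℕ) : ℤ) = (K : ℤ) := by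
          rw [hK]
          push_cast
          rw [Finset.sum_congr rfl (fun i _ => by
            have := hσ i
            push_cast
            omega : ∀ i ∈ (Finset.univ : Finset (Fin s)),
              (((p (σ i)).natDegree - (i : ℕ) : ℕ) : ℤ) =
                ((p (σ i)).natDegree : ℤ) - ((i : ℕ) : ℤ))]
          rw [Finset.sum_sub_distrib, sum_fin_coe]
          congr 1
          exact Equiv.sum_comp σ (fun i => ((p i).natDegree : ℤ))
        exact_mod_cast h2
      rw [← hsum, coeff_prod' _ _ _ (fun i _ => dmat_entry_natDegree_le p (σ i) i)]
      refine Finset.prod_congr rfl fun i _ => ?_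
      rw [Dmat, Matrix.of_apply,
        fdIter_coeff_top _ _ _ le_rfl _ (by have := hσ i; push_cast; omega)]
      rfl
    · push_neg at hσ
      obtain ⟨i, hi⟩ := hσ
      have hz : (∏ j : Fin s, Dmat p (σ j) j) = 0 :=
        Finset.prod_eq_zero (Finset.mem_univ i) (dmat_entry_zero p hi)
      rw [hz, coeff_zero]
      refine (Finset.prod_eq_zero (Finset.mem_univ i) ?_).symm
      show (p (σ i)).leadingCoeff * ∏ t ∈ Finset.range ((i : Fin s) : ℕ),
          (((p (σ i)).natDegree : ℝ) - (t : ℝ)) = 0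
      rw [Finset.prod_eq_zero (Finset.mem_range.mpr hi)
          (by rw [sub_self] : ((p (σ i)).natDegree : ℝ) - (((p (σ i)).natDegree : ℕ) : ℝ) = 0),
        mul_zero]
  rw [main]
  erw [Matrix.det_mul_column (fun i => (p i).leadingCoeff)
    (Matrix.of fun i j : Fin s => ∏ t ∈ Finset.range (j : ℕ), (((p i).natDegree : ℝ) - (t : ℝ)))]
  congr 1
  have hdeg : ∀ j : Fin s,
      (∏ t ∈ Finset.range (j : ℕ), (X - C ((t : ℕ) : ℝ))).natDegree = (j : ℕ) := by
    intro j
    rw [natDegree_prod_of_monic _ _ (fun t _ => monic_X_sub_C _),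
      Finset.sum_congr rfl (fun t _ => natDegree_X_sub_C ((t : ℕ) : ℝ))]
    simp
  have hmonic : ∀ j : Fin s, (∏ t ∈ Finset.range (j : ℕ), (X - C ((t : ℕ) : ℝ))).Monic :=
    fun j => monic_prod_of_monic _ _ (fun t _ => monic_X_sub_C _)
  rw [Matrix.det_eval_matrixOfPolynomials_eq_det_vandermonde
    (fun i : Fin s => (((p i).natDegree : ℕ) : ℝ))
    (fun j : Fin s => ∏ t ∈ Finset.range (j : ℕ), (X - C ((t : ℕ) : ℝ))) hdeg hmonic]
  congr 1
  apply Matrix.ext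
  intro i j
  simp [eval_prod]

end Cas16


open Cas16

/-- if the degrees of the nonzero polynomials `p_1,…,p_s` are pairwise distinct,
then their Casoratian `Φ` is nonzero of degree exactly `Σ deg p_i − s(s−1)/2`; otherwise either
`Φ = 0` or `deg Φ < Σ deg p_i − s(s−1)/2`. -/
theorem statement16 (s : ℕ) (p : Fin s → Polynomial ℝ) (hp : ∀ i, p i ≠ 0) :
    (Function.Injective (fun i => (p i).natDegree) →
      casPoly p ≠ 0 ∧
        ((casPoly p).natDegree : ℤ) =
          (∑ i : Fin s, ((p i).natDegree : ℤ)) - (Nat.choose s 2 : ℤ)) ∧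
    (¬ Function.Injective (fun i => (p i).natDegree) →
      casPoly p = 0 ∨
        ((casPoly p).natDegree : ℤ) <
          (∑ i : Fin s, ((p i).natDegree : ℤ)) - (Nat.choose s 2 : ℤ)) := by
  set NZ : ℤ := (∑ i : Fin s, ((p i).natDegree : ℤ)) - (Nat.choose s 2 : ℤ) with hNZdef
  set e : ℝ := ∏ k : Fin s, (-1 : ℝ) ^ (k : ℕ) with hedef
  have he : e * e = 1 := by
    rw [hedef, ← Finset.prod_mul_distrib]
    simp [← mul_pow]
  have he0 : e ≠ 0 := left_ne_zero_of_mul_eq_one he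
  have hcoeff : ∀ k : ℕ, (casPoly p).coeff k = ((Dmat p).det).coeff k * e := by
    intro k
    have h1 : ((Dmat p).det).coeff k = (casPoly p).coeff k * e := by
      rw [dmat_det_eq p, coeff_mul_C]
    rw [h1, mul_assoc, he, mul_one]
  have hzero : ∀ k : ℕ, NZ < (k : ℤ) → (casPoly p).coeff k = 0 := by
    intro k hk
    rw [hcoeff, psi_coeff_zero p k hk, zero_mul]
  constructor
  · intro hinj
    have hNZ : 0 ≤ NZ := sub_nonneg.mpr (choose_two_le_sum hinj)
    have hKZ : ((NZ.toNat : ℕ) : ℤ) = NZ := Int.toNat_of_nonneg hNZ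
    have hV : (Matrix.vandermonde fun i : Fin s => (((p i).natDegree : ℕ) : ℝ)).det ≠ 0 :=
      Matrix.det_vandermonde_ne_zero_iff.mpr
        (fun a b hab => hinj (Nat.cast_injective hab))
    have hL : (∏ i, (p i).leadingCoeff) ≠ 0 :=
      Finset.prod_ne_zero_iff.mpr fun i _ => leadingCoeff_ne_zero.mpr (hp i)
    have hcK : (casPoly p).coeff NZ.toNat ≠ 0 := by
      rw [hcoeff, psi_coeff_top p _ hKZ]
      exact mul_ne_zero (mul_ne_zero hL hV) he0
    have hne : casPoly p ≠ 0 := fun h => hcK (by rw [h, coeff_zero])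
    refine ⟨hne, ?_⟩
    have h1 : NZ.toNat ≤ (casPoly p).natDegree := le_natDegree_of_ne_zero hcK
    have h2 : (casPoly p).natDegree ≤ NZ.toNat :=
      natDegree_le_iff_coeff_eq_zero.mpr fun N hN =>
        hzero N (by rw [← hKZ]; exact_mod_cast hN)
    rw [le_antisymm h2 h1, hKZ]
  · intro hninj
    by_cases h0 : casPoly p = 0
    · exact Or.inl h0
    refine Or.inr ?_
    rcases lt_or_ge ((casPoly p).natDegree : ℤ) NZ with h | h
    · exact h
    exfalso
    have hlc : (casPoly p).coeff (casPoly p).natDegree ≠ 0 := by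
      rw [← leadingCoeff]
      exact leadingCoeff_ne_zero.mpr h0
    rcases eq_or_lt_of_le h with heq | hlt
    · apply hlc
      rw [hcoeff, psi_coeff_top p _ heq.symm]
      have hV0 : (Matrix.vandermonde fun i : Fin s => (((p i).natDegree : ℕ) : ℝ)).det = 0 := by
        by_contra hv
        refine hninj fun a b hab => ?_
        have hinj' := Matrix.det_vandermonde_ne_zero_iff.mp hv
        have hab' : (p a).natDegree = (p b).natDegree := hab
        exact hinj' (by show (((p a).natDegree : ℕ) : ℝ) = (((p b).natDegree : ℕ) : ℝ); rw [hab'])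
      rw [hV0, mul_zero, zero_mul]
    · exact hlc (hzero _ hlt)
end

section
/- Let α be a real number and l a positive integer with α − l > −1. Then for every integer n ≥ 0, ∫_0^∞ L_n^α(x)·x^{α−l}·e^{−x} dx = Γ(α−l+1)·binom(n+l−1, l−1), where binom(n+l−1, l−1) is the ordinary integer binomial coefficient. -/
open Polynomial Finset

lemma ascPoch_prod (x : ℝ) (k : ℕ) :
    (ascPochhammer ℝ k).eval x = ∏ t ∈ Finset.range k, (x + t) := by
  induction k with
  | zero => simp
  | succ k ih => rw [ascPochhammer_succ_eval, ih, Finset.prod_range_succ]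

lemma choose_eq_prod (r : ℝ) (k : ℕ) :
    (Nat.factorial k : ℝ) * Ring.choose r k = ∏ t ∈ Finset.range k, (r - k + 1 + t) := by
  have h1 := Ring.descPochhammer_eq_factorial_smul_choose r k
  rw [Polynomial.descPochhammer_smeval_eq_ascPochhammer, Polynomial.ascPochhammer_smeval_eq_eval,
    ascPoch_prod] at h1
  rw [← nsmul_eq_mul]
  exact h1.symm

lemma genBinom_eq_choose (α : ℝ) (n j : ℕ) (hj : j ≤ n) :
    genBinom α n j = Ring.choose (α + n) (n - j) := by
  have hfac : (Nat.factorial (n - j) : ℝ) ≠ 0 := by positivity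
  rw [genBinom, div_eq_iff hfac, mul_comm, choose_eq_prod]
  rw [Finset.prod_Ico_eq_prod_range]
  refine Finset.prod_congr (by congr 1; omega) fun t _ => ?_
  have hnj : ((n - j : ℕ) : ℝ) = (n : ℝ) - j := by
    rw [Nat.cast_sub hj]
  rw [hnj]
  push_cast
  ring

lemma poch_eq_choose (α : ℝ) (l j : ℕ) :
    poch (α - l + 1) j
      = (-1 : ℝ) ^ j * ((Nat.factorial j : ℝ) * Ring.choose ((l : ℝ) - 1 - α) j) := by
  rw [choose_eq_prod, poch,
    ← Finset.prod_range_reflect (fun t => (α - (l : ℝ) + 1 + t)) j,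
    show ((-1 : ℝ) ^ j) = ∏ _t ∈ Finset.range j, (-1 : ℝ) by simp,
    ← Finset.prod_mul_distrib]
  refine Finset.prod_congr rfl fun t ht => ?_
  have htj : t < j := Finset.mem_range.mp ht
  have h1 : ((j - 1 - t : ℕ) : ℝ) = (j : ℝ) - 1 - t := by
    rw [Nat.sub_sub, Nat.cast_sub (by omega)]
    push_cast; ring
  rw [h1]; ring

lemma key_sum (α : ℝ) (l : ℕ) (hl : 1 ≤ l) (n : ℕ) :
    ∑ j ∈ Finset.range (n + 1),
      (-1 : ℝ) ^ j / (Nat.factorial j : ℝ) * genBinom α n j * poch (α - l + 1) j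
      = (Nat.choose (n + l - 1) (l - 1) : ℝ) := by
  have h1 : ∀ j ∈ Finset.range (n + 1),
      (-1 : ℝ) ^ j / (Nat.factorial j : ℝ) * genBinom α n j * poch (α - l + 1) j
        = Ring.choose (α + n) (n - j) * Ring.choose ((l : ℝ) - 1 - α) j := by
    intro j hj
    have hjn : j ≤ n := Nat.lt_succ_iff.mp (Finset.mem_range.mp hj)
    rw [poch_eq_choose, genBinom_eq_choose α n j hjn]
    have hfac : (Nat.factorial j : ℝ) ≠ 0 := by positivity
    field_simp
    have hsq : ((-1:ℝ)) ^ j * (-1) ^ j = 1 := by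
      rw [← pow_add]; exact Even.neg_one_pow ⟨j, rfl⟩
    linear_combination (Ring.choose (α + ↑n) (n - j) * Ring.choose ((l:ℝ) - 1 - α) j) * hsq
  rw [Finset.sum_congr rfl h1]
  rw [← Finset.sum_range_reflect
    (fun j => Ring.choose (α + n) (n - j) * Ring.choose ((l : ℝ) - 1 - α) j) (n + 1)]
  have h2 : ∀ j ∈ Finset.range (n + 1),
      Ring.choose (α + n) (n - (n + 1 - 1 - j)) * Ring.choose ((l : ℝ) - 1 - α) (n + 1 - 1 - j)
        = Ring.choose (α + n) j * Ring.choose ((l : ℝ) - 1 - α) (n - j) := by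
    intro j hj
    have hjn : j ≤ n := Nat.lt_succ_iff.mp (Finset.mem_range.mp hj)
    congr 2 <;> omega
  rw [Finset.sum_congr rfl h2,
    ← Finset.Nat.sum_antidiagonal_eq_sum_range_succ
      (fun a b => Ring.choose (α + n) a * Ring.choose ((l : ℝ) - 1 - α) b),
    ← Ring.add_choose_eq n (Commute.all _ _)]
  have h3 : α + (n : ℝ) + ((l : ℝ) - 1 - α) = ((n + l - 1 : ℕ) : ℝ) := by
    have : ((n + l - 1 : ℕ) : ℝ) = (n : ℝ) + l - 1 := by
      rw [Nat.cast_sub (by omega)]; push_cast; ring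
    rw [this]; ring
  rw [h3, Ring.choose_natCast]
  congr 1
  have := Nat.choose_symm (n := n + l - 1) (k := n) (by omega)
  rw [show n + l - 1 - n = l - 1 by omega] at this
  exact this.symm

lemma gamma_shift (β : ℝ) (hβ : 0 < β) (j : ℕ) :
    Real.Gamma (β + j) = poch β j * Real.Gamma β := by
  induction j with
  | zero => simp [poch]
  | succ j ih =>
    have hne : β + j ≠ 0 := by
      have : (0:ℝ) ≤ j := Nat.cast_nonneg j
      linarith
    rw [show β + ((j : ℕ) + 1 : ℕ) = (β + j) + 1 by push_cast; ring,
      Real.Gamma_add_one hne, ih]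
    simp only [poch, Finset.prod_range_succ]
    ring

/-- `∫_0^∞ L_n^α(x)·x^{α−l}·e^{−x} dx = Γ(α−l+1)·binom(n+l−1, l−1)` for `α − l > −1`. -/
theorem statement17 (α : ℝ) (l : ℕ) (hl : 1 ≤ l) (hαl : α - l > -1) (n : ℕ) :
    ∫ x in Set.Ioi (0 : ℝ),
        (laguerre α n).eval x * x ^ (α - (l : ℝ)) * Real.exp (-x) =
      Real.Gamma (α - l + 1) * (Nat.choose (n + l - 1) (l - 1) : ℝ) := by
  have hβ : 0 < α - l + 1 := by linarith
  set c : ℕ → ℝ := fun j => (-1 : ℝ) ^ j / (Nat.factorial j : ℝ) * genBinom α n j with hc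
  have hpt : ∀ x ∈ Set.Ioi (0 : ℝ),
      (laguerre α n).eval x * x ^ (α - (l : ℝ)) * Real.exp (-x)
        = ∑ j ∈ Finset.range (n + 1), c j * (Real.exp (-x) * x ^ (α - l + j)) := by
    intro x hx
    have hx0 : (0 : ℝ) < x := hx
    rw [laguerre, Polynomial.eval_finset_sum]
    simp only [Polynomial.eval_mul, Polynomial.eval_C, Polynomial.eval_pow, Polynomial.eval_X]
    rw [Finset.sum_mul, Finset.sum_mul]
    refine Finset.sum_congr rfl fun j _ => ?_
    rw [Real.rpow_add hx0, Real.rpow_natCast]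
    ring
  rw [MeasureTheory.setIntegral_congr_fun measurableSet_Ioi hpt]
  have hint : ∀ j : ℕ, MeasureTheory.IntegrableOn
      (fun x => c j * (Real.exp (-x) * x ^ (α - l + j))) (Set.Ioi (0 : ℝ)) := by
    intro j
    refine MeasureTheory.Integrable.const_mul ?_ _
    have hj0 : (0:ℝ) ≤ j := Nat.cast_nonneg j
    have := Real.GammaIntegral_convergent (s := α - l + j + 1) (by linarith)
    simpa [MeasureTheory.IntegrableOn] using this
  rw [MeasureTheory.integral_finset_sum _ (fun j _ => hint j)]
  have hval : ∀ j : ℕ,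
      (∫ x in Set.Ioi (0 : ℝ), c j * (Real.exp (-x) * x ^ (α - l + j)))
        = c j * (poch (α - l + 1) j * Real.Gamma (α - l + 1)) := by
    intro j
    rw [MeasureTheory.integral_const_mul]
    congr 1
    have hs : (0 : ℝ) < α - l + j + 1 := by
      have : (0:ℝ) ≤ j := Nat.cast_nonneg j
      linarith
    have := (Real.Gamma_eq_integral hs).symm
    rw [show α - l + j + 1 - 1 = α - l + j by ring] at this
    rw [this, show α - l + (j : ℝ) + 1 = (α - l + 1) + j by ring, gamma_shift _ hβ]
  rw [Finset.sum_congr rfl fun j _ => hval j]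
  rw [← key_sum α l hl n, Finset.mul_sum]
  refine Finset.sum_congr rfl fun j _ => ?_
  rw [hc]; ring
end

section
/- Let α and m be positive integers with 1 ≤ α ≤ m−1, let G = {α, α+1, …, α+m−1} (so g_h = α+h−1 for h = 1,…,m), and for h = 1,…,m let R_{g_h}(x) = binom(x+α+h−1, α+h−1) + (h−1)!·Σ_{l=0}^{h+α−m−1} ((−1)^l·ã_{h−l−1}/(α−l)_l)·binom(x+l, l), where ã_0, …, ã_{m−1} are real numbers and empty sums equal 0 (here binom(x+l, l) = (x+1)(x+2)⋯(x+l)/l! and (a)_l = a(a+1)⋯(a+l−1)). Assume Ω_G(n) ≠ 0 for every integer n ≥ 0. Then q_n^{(j)}(0) = 0 for every j = 0,…,m−α−1 and every n ≥ m−α. -/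
open Polynomial Finset

section Statement18Aux

lemma st18_binomPoly_eval (l : ℕ) (x : ℝ) :
    (binomPoly l).eval x = (Nat.factorial l : ℝ)⁻¹ * ∏ t ∈ Finset.range l, (x + t + 1) := by
  simp [binomPoly, eval_prod, add_assoc]

lemma st18_binomPoly_sub_one (d : ℕ) (x : ℝ) :
    (binomPoly (d+1)).eval (x - 1) = (binomPoly (d+1)).eval x - (binomPoly d).eval x := by
  rw [st18_binomPoly_eval, st18_binomPoly_eval, st18_binomPoly_eval]
  rw [Finset.prod_range_succ' (fun t => x - 1 + t + 1), Finset.prod_range_succ]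
  have h1 : ∀ t : ℕ, x - 1 + ((t:ℝ)+1) + 1 = x + t + 1 := by intro t; ring
  simp only [Nat.cast_add, Nat.cast_one, h1, Nat.cast_zero]
  have hd : ((d+1).factorial : ℝ) = (d+1) * d.factorial := by
    rw [Nat.factorial_succ]; push_cast; ring
  have h2 : (d.factorial : ℝ) ≠ 0 := Nat.cast_ne_zero.mpr (Nat.factorial_ne_zero d)
  rw [hd]
  field_simp
  ring

lemma st18_sum_pascal (j : ℕ) (b : ℕ → ℝ) :
    ∑ k ∈ Finset.range (j+1), (-1:ℝ)^(j+k) * (j.choose k) * (b (k+1) - b k)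
      = ∑ k ∈ Finset.range (j+2), (-1:ℝ)^(j+1+k) * ((j+1).choose k) * b k := by
  rw [Finset.sum_range_succ' (fun k => (-1:ℝ)^(j+1+k) * ((j+1).choose k) * b k) (j+1)]
  have hs : ∀ k, (-1:ℝ)^(j+1+(k+1)) = (-1:ℝ)^(j+k) := by
    intro k
    have h : j+1+(k+1) = (j+k) + 2 := by ring
    rw [h, pow_add]; norm_num
  simp only [Nat.choose_succ_succ, Nat.cast_add, hs, mul_add, add_mul, mul_sub]
  rw [Finset.sum_sub_distrib, Finset.sum_add_distrib]
  have e3 : ∑ k ∈ Finset.range (j+1), (-1:ℝ)^(j+k) * (j.choose (k+1)) * b (k+1)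
      = ∑ k ∈ Finset.range j, (-1:ℝ)^(j+k) * (j.choose (k+1)) * b (k+1) := by
    rw [Finset.sum_range_succ]
    simp [Nat.choose_succ_self]
  have e2 : ∑ k ∈ Finset.range (j+1), (-1:ℝ)^(j+k) * (j.choose k) * b k
      = ∑ k ∈ Finset.range j, (-1:ℝ)^(j+(k+1)) * (j.choose (k+1)) * b (k+1)
        + (-1:ℝ)^(j+0) * (j.choose 0) * b 0 := by
    rw [Finset.sum_range_succ' (fun k => (-1:ℝ)^(j+k) * (j.choose k) * b k) j]
  rw [e3, e2]
  have e4 : ∑ k ∈ Finset.range j, (-1:ℝ)^(j+(k+1)) * (j.choose (k+1)) * b (k+1)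
      = - ∑ k ∈ Finset.range j, (-1:ℝ)^(j+k) * (j.choose (k+1)) * b (k+1) := by
    rw [← Finset.sum_neg_distrib]
    refine Finset.sum_congr rfl fun k _ => ?_
    have h : j + (k+1) = (j+k) + 1 := by ring
    rw [h, pow_succ]; ring
  rw [e4]
  simp [pow_succ]
  ring

lemma st18_binomPoly_shift (j : ℕ) : ∀ d : ℕ, ∀ x : ℝ,
    (binomPoly (d + j)).eval (x - j) =
      ∑ k ∈ Finset.range (j+1), (-1:ℝ)^(j+k) * (j.choose k) * (binomPoly (d + k)).eval x := by
  induction j with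
  | zero => intro d x; simp
  | succ j ih =>
    intro d x
    have h1 : d + (j+1) = (d+1) + j := by ring
    have h2 : x - ((j+1 : ℕ) : ℝ) = (x - 1) - j := by push_cast; ring
    rw [h1, h2, ih (d+1) (x-1)]
    have step : ∀ k ∈ Finset.range (j+1),
        (-1:ℝ)^(j+k) * (j.choose k) * (binomPoly (d+1+k)).eval (x-1)
        = (-1:ℝ)^(j+k) * (j.choose k)
            * ((binomPoly (d+(k+1))).eval x - (binomPoly (d+k)).eval x) := by
      intro k _
      have h3 : d + 1 + k = (d + k) + 1 := by ring
      have h4 : d + (k+1) = (d + k) + 1 := by ring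
      rw [h3, st18_binomPoly_sub_one, h4]
    rw [Finset.sum_congr rfl step]
    exact st18_sum_pascal j (fun k => (binomPoly (d + k)).eval x)

lemma st18_prod_range_shift (s : ℕ) : ∀ d : ℕ,
    s.factorial * ∏ t ∈ Finset.range d, (s + t + 1) = (s + d).factorial := by
  intro d
  induction d with
  | zero => simp
  | succ d ih =>
    rw [Finset.prod_range_succ, ← mul_assoc, ih]
    have : s + (d+1) = (s + d) + 1 := by ring
    rw [this, Nat.factorial_succ]
    ring

lemma st18_prod_Ico_shift (a j : ℕ) : ∀ u : ℕ, j ≤ u →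
    (a + j).factorial * ∏ t ∈ Finset.Ico (j+1) (u+1), (a + t) = (a + u).factorial := by
  intro u hu
  induction u, hu using Nat.le_induction with
  | base => simp
  | succ u hu ih =>
    rw [Finset.prod_Ico_succ_top (by omega : j + 1 ≤ u + 1)]
    rw [← mul_assoc, ih]
    have : a + (u+1) = (a + u) + 1 := by ring
    rw [this, Nat.factorial_succ]
    ring

lemma st18_genBinom_eq (α u j : ℕ) (h : j ≤ u) :
    genBinom (α : ℝ) u j
      = ((α+u).factorial : ℝ) / (((α+j).factorial : ℝ) * ((u-j).factorial : ℝ)) := by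
  have h1 := st18_prod_Ico_shift α j u h
  have h2 : ((α+j).factorial : ℝ) * (∏ t ∈ Finset.Ico (j+1) (u+1), ((α:ℝ) + t))
      = ((α+u).factorial : ℝ) := by
    rw [show (∏ t ∈ Finset.Ico (j+1) (u+1), ((α:ℝ) + t))
        = ((∏ t ∈ Finset.Ico (j+1) (u+1), (α + t) : ℕ) : ℝ) by push_cast; rfl]
    rw [← Nat.cast_mul, h1]
  rw [genBinom]
  have hfj : ((α+j).factorial : ℝ) ≠ 0 := Nat.cast_ne_zero.mpr (Nat.factorial_ne_zero _)
  have hfu : (((u-j)).factorial : ℝ) ≠ 0 := Nat.cast_ne_zero.mpr (Nat.factorial_ne_zero _)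
  field_simp
  linear_combination h2

lemma st18_binomPoly_eval_nat (d s : ℕ) :
    (binomPoly d).eval (s : ℝ)
      = ((s+d).factorial : ℝ) / ((d.factorial : ℝ) * (s.factorial : ℝ)) := by
  have h1 := st18_prod_range_shift s d
  have h2 : ((s.factorial : ℝ)) * (∏ t ∈ Finset.range d, ((s:ℝ) + t + 1))
      = ((s+d).factorial : ℝ) := by
    rw [show (∏ t ∈ Finset.range d, ((s:ℝ) + t + 1))
        = ((∏ t ∈ Finset.range d, (s + t + 1) : ℕ) : ℝ) by push_cast; rfl]
    rw [← Nat.cast_mul, h1]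
  rw [st18_binomPoly_eval]
  have hfd : ((d.factorial : ℝ)) ≠ 0 := Nat.cast_ne_zero.mpr (Nat.factorial_ne_zero _)
  have hfs : ((s.factorial : ℝ)) ≠ 0 := Nat.cast_ne_zero.mpr (Nat.factorial_ne_zero _)
  field_simp
  linear_combination h2

lemma st18_eval0_iter_deriv (p : Polynomial ℝ) (j : ℕ) :
    Polynomial.eval 0 (Polynomial.derivative^[j] p) = (j.factorial : ℝ) * p.coeff j := by
  rw [← Polynomial.coeff_zero_eq_eval_zero, Polynomial.coeff_iterate_derivative]
  simp [Nat.descFactorial_self, nsmul_eq_mul]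

lemma st18_laguerre_coeff (α : ℝ) (v j : ℕ) :
    (laguerre α v).coeff j =
      if j ≤ v then (-1:ℝ)^j / (j.factorial : ℝ) * genBinom α v j else 0 := by
  rw [laguerre, Polynomial.finset_sum_coeff]
  simp only [Polynomial.coeff_C_mul, Polynomial.coeff_X_pow]
  simp only [mul_ite, mul_one, mul_zero]
  rw [Finset.sum_ite_eq (Finset.range (v+1)) j
    (fun t => (-1:ℝ)^t / (t.factorial : ℝ) * genBinom α v t)]
  by_cases h : j ≤ v
  · rw [if_pos (by simp; omega), if_pos h]
  · rw [if_neg (by simp; omega), if_neg h]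

lemma st18_binomPoly_eval_zero_int (α j : ℕ) (u : ℤ) (h1 : -(α:ℤ) ≤ u) (h2 : u < j) :
    (binomPoly (α+j)).eval ((u:ℝ) - j) = 0 := by
  rw [st18_binomPoly_eval]
  have ht : (j - 1 - u).toNat ∈ Finset.range (α+j) := by
    simp [Finset.mem_range]; omega
  rw [Finset.prod_eq_zero ht]
  · ring
  · have : (((j - 1 - u).toNat : ℤ) : ℝ) = (j:ℝ) - 1 - u := by
      rw [Int.toNat_of_nonneg (by omega)]; push_cast; ring
    push_cast at this ⊢
    rw [this]; ring

lemma st18_Ekey (α : ℕ) (j : ℕ) (u : ℤ) (hu : -(α:ℤ) ≤ u) :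
    Polynomial.eval 0 (Polynomial.derivative^[j] (laguerreZ (α:ℝ) u)) =
      (-1:ℝ)^j * (binomPoly (α+j)).eval ((u:ℝ) - j) := by
  by_cases hneg : u < 0
  · rw [laguerreZ, if_pos hneg, Polynomial.iterate_derivative_zero, Polynomial.eval_zero,
      st18_binomPoly_eval_zero_int α j u hu (by omega), mul_zero]
  · rw [laguerreZ, if_neg hneg]
    push_neg at hneg
    set v := u.toNat with hv
    have hvu : (v : ℤ) = u := Int.toNat_of_nonneg hneg
    have huv : (u : ℝ) = (v : ℝ) := by exact_mod_cast congrArg (Int.cast : ℤ → ℝ) hvu.symm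
    rw [st18_eval0_iter_deriv, st18_laguerre_coeff]
    by_cases h : j ≤ v
    · rw [if_pos h, st18_genBinom_eq α v j h]
      have : (u:ℝ) - j = ((v - j : ℕ) : ℝ) := by
        rw [huv]; push_cast [Nat.cast_sub h]; ring
      rw [this, st18_binomPoly_eval_nat (α+j) (v-j)]
      have hvj : v - j + (α + j) = α + v := by omega
      rw [hvj]
      have hj : ((j.factorial : ℕ):ℝ) ≠ 0 := Nat.cast_ne_zero.mpr (Nat.factorial_ne_zero _)
      field_simp
    · rw [if_neg h, mul_zero]
      rw [st18_binomPoly_eval_zero_int α j u hu (by omega)]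
      ring

/-- the `c`-th cofactor (minor determinant) of the `R`-rows. -/
noncomputable def st18_dmin {m : ℕ} (R : Fin m → Polynomial ℝ) (n : ℤ) (c : Fin (m+1)) : ℝ :=
  Matrix.det (Matrix.of fun i c' : Fin m =>
    (R i).eval ((n : ℝ) - ((c.succAbove c' : Fin (m+1)) : ℕ)))

lemma st18_qpoly_expand (α : ℝ) {m : ℕ} (R : Fin m → Polynomial ℝ) (n : ℤ) :
    qpoly α R n = ∑ c : Fin (m+1),
      Polynomial.C ((-1:ℝ)^(c:ℕ) * st18_dmin R n c) * laguerreZ α (n - (c:ℕ)) := by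
  rw [qpoly, Matrix.det_succ_row_zero]
  refine Finset.sum_congr rfl fun c _ => ?_
  have h0 : (Matrix.of fun i j : Fin (m + 1) =>
      if h : (i : ℕ) = 0 then laguerreZ α (n - (j : ℕ))
      else Polynomial.C ((R ⟨(i : ℕ) - 1, by have := i.isLt; omega⟩).eval ((n : ℝ) - ((j : ℕ) : ℝ))))
      0 c = laguerreZ α (n - (c:ℕ)) := by
    simp
  rw [h0]
  have hsub : ((Matrix.of fun i j : Fin (m + 1) =>
      if h : (i : ℕ) = 0 then laguerreZ α (n - (j : ℕ))
      else Polynomial.C ((R ⟨(i : ℕ) - 1, by have := i.isLt; omega⟩).eval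
        ((n : ℝ) - ((j : ℕ) : ℝ)))).submatrix Fin.succ c.succAbove)
      = (Matrix.of fun i c' : Fin m =>
          (R i).eval ((n : ℝ) - ((c.succAbove c' : Fin (m+1)) : ℕ))).map Polynomial.C := by
    ext i c'
    simp [Matrix.submatrix, Fin.val_succ]
  rw [hsub]
  have hdet : ((Matrix.of fun i c' : Fin m =>
      (R i).eval ((n : ℝ) - ((c.succAbove c' : Fin (m+1)) : ℕ))).map ⇑Polynomial.C).det
      = Polynomial.C (st18_dmin R n c) := by
    rw [← RingHom.mapMatrix_apply, ← RingHom.map_det, st18_dmin]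
  rw [hdet]
  have hpow : ((-1 : Polynomial ℝ))^(c:ℕ) = Polynomial.C ((-1:ℝ)^(c:ℕ)) := by
    rw [map_pow, map_neg, map_one]
  rw [hpow, Polynomial.C_mul]
  ring

/-- the real matrix with an arbitrary first row `f` over the `R`-rows. -/
noncomputable def st18_Nmat {m : ℕ} (R : Fin m → Polynomial ℝ) (n : ℤ)
    (f : Fin (m+1) → ℝ) : Matrix (Fin (m+1)) (Fin (m+1)) ℝ :=
  Matrix.of fun i c : Fin (m + 1) =>
    if h : (i : ℕ) = 0 then f c
    else (R ⟨(i : ℕ) - 1, by have := i.isLt; omega⟩).eval ((n : ℝ) - ((c : ℕ) : ℝ))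

lemma st18_Nmat_expand {m : ℕ} (R : Fin m → Polynomial ℝ) (n : ℤ) (f : Fin (m+1) → ℝ) :
    (st18_Nmat R n f).det = ∑ c : Fin (m+1), (-1:ℝ)^(c:ℕ) * f c * st18_dmin R n c := by
  rw [Matrix.det_succ_row_zero]
  refine Finset.sum_congr rfl fun c _ => ?_
  have h0 : st18_Nmat R n f 0 c = f c := by simp [st18_Nmat]
  have hsub : (st18_Nmat R n f).submatrix Fin.succ c.succAbove
      = Matrix.of fun i c' : Fin m =>
          (R i).eval ((n : ℝ) - ((c.succAbove c' : Fin (m+1)) : ℕ)) := by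
    ext i c'
    simp [st18_Nmat, Matrix.submatrix, Fin.val_succ]
  rw [h0, hsub, st18_dmin]

lemma st18_Nmat_det_zero {m : ℕ} (R : Fin m → Polynomial ℝ) (n : ℤ) (k : ℕ) (hk : k < m) :
    (st18_Nmat R n (fun c => (R ⟨k, hk⟩).eval ((n : ℝ) - ((c : ℕ) : ℝ)))).det = 0 := by
  apply Matrix.det_zero_of_row_eq
    (i := (0 : Fin (m+1))) (j := ⟨k+1, by omega⟩)
  · intro h
    have := congrArg Fin.val h
    simp at this
  · funext c
    simp [st18_Nmat]

end Statement18Aux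


/-- for `1 ≤ α ≤ m−1`, `G = {α, α+1, …, α+m−1}` and `R_{g_h}` given by
formula (rpm1), one has `q_n^{(j)}(0) = 0` for `j = 0,…,m−α−1` and `n ≥ m−α`. -/
theorem statement18 (α m : ℕ) (hα : 1 ≤ α) (hαm : α + 1 ≤ m)
    (ta : ℕ → ℝ) (R : Fin m → Polynomial ℝ)
    (hR : ∀ i : Fin m,
      R i = binomPoly (α + (i : ℕ)) +
        Polynomial.C ((Nat.factorial (i : ℕ) : ℝ)) *
          ∑ l ∈ Finset.range ((i : ℕ) + 1 + α - m),
            Polynomial.C ((-1 : ℝ) ^ l * ta ((i : ℕ) - l) / poch ((α : ℝ) - l) l) * binomPoly l)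
    (hΩ : ∀ n : ℕ, casoratian R (n : ℝ) ≠ 0) :
    ∀ j : ℕ, j + α + 1 ≤ m → ∀ n : ℕ, m - α ≤ n →
      Polynomial.eval 0 (Polynomial.derivative^[j] (qpoly (α : ℝ) R (n : ℤ))) = 0 := by
  intro j hj n hn
  rw [st18_qpoly_expand, Polynomial.iterate_derivative_sum, Polynomial.eval_finset_sum]
  have hterm : ∀ c : Fin (m+1),
      Polynomial.eval 0 (Polynomial.derivative^[j]
        (Polynomial.C ((-1:ℝ)^(c:ℕ) * st18_dmin R (n:ℤ) c) * laguerreZ (α:ℝ) ((n:ℤ) - (c:ℕ))))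
      = (-1:ℝ)^(c:ℕ) * st18_dmin R (n:ℤ) c *
          Polynomial.eval 0 (Polynomial.derivative^[j] (laguerreZ (α:ℝ) ((n:ℤ) - (c:ℕ)))) := by
    intro c
    rw [Polynomial.iterate_derivative_C_mul, Polynomial.eval_mul, Polynomial.eval_C]
  rw [Finset.sum_congr rfl (fun c _ => hterm c)]
  have hE : ∀ c : Fin (m+1),
      Polynomial.eval 0 (Polynomial.derivative^[j] (laguerreZ (α:ℝ) ((n:ℤ) - (c:ℕ))))
      = ∑ k ∈ Finset.range (j+1), (-1:ℝ)^k * (j.choose k)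
          * (binomPoly (α+k)).eval (((n:ℤ):ℝ) - ((c:ℕ):ℝ)) := by
    intro c
    have hc : (c:ℕ) ≤ m := Nat.le_of_lt_succ c.isLt
    have hu : -(α:ℤ) ≤ (n:ℤ) - (c:ℕ) := by omega
    rw [st18_Ekey α j _ hu]
    have hx : ((((n:ℤ) - (c:ℕ)) : ℤ) : ℝ) = ((n:ℤ):ℝ) - ((c:ℕ):ℝ) := by push_cast; ring
    rw [hx, st18_binomPoly_shift j α (((n:ℤ):ℝ) - ((c:ℕ):ℝ)), Finset.mul_sum]
    refine Finset.sum_congr rfl fun k _ => ?_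
    have hsgn : (-1:ℝ)^j * ((-1:ℝ)^(j+k)) = (-1:ℝ)^k := by
      rw [← pow_add]
      have h2 : j + (j + k) = 2*j + k := by ring
      rw [h2, pow_add, pow_mul]
      norm_num
    calc (-1:ℝ)^j * ((-1:ℝ)^(j+k) * (j.choose k)
          * (binomPoly (α+k)).eval (((n:ℤ):ℝ) - ((c:ℕ):ℝ)))
        = ((-1:ℝ)^j * (-1:ℝ)^(j+k)) * (j.choose k)
          * (binomPoly (α+k)).eval (((n:ℤ):ℝ) - ((c:ℕ):ℝ)) := by ring
      _ = (-1:ℝ)^k * (j.choose k)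
          * (binomPoly (α+k)).eval (((n:ℤ):ℝ) - ((c:ℕ):ℝ)) := by rw [hsgn]
  rw [Finset.sum_congr rfl (fun c _ => by rw [hE c])]
  simp only [Finset.mul_sum]
  rw [Finset.sum_comm]
  refine Finset.sum_eq_zero fun k hk => ?_
  have hkj : k ≤ j := by
    have := Finset.mem_range.mp hk; omega
  have hkm : k < m := by omega
  have hRB : binomPoly (α + k) = R ⟨k, hkm⟩ := by
    rw [hR ⟨k, hkm⟩]
    have hval : ((⟨k, hkm⟩ : Fin m) : ℕ) = k := rfl
    rw [hval]
    have hz : k + 1 + α - m = 0 := by omega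
    rw [hz]
    simp
  rw [hRB]
  have hfinal : ∑ c : Fin (m+1),
      (-1:ℝ)^(c:ℕ) * st18_dmin R (n:ℤ) c
        * ((-1:ℝ)^k * (j.choose k) * (R ⟨k, hkm⟩).eval (((n:ℤ):ℝ) - ((c:ℕ):ℝ)))
      = ((-1:ℝ)^k * (j.choose k)) * ∑ c : Fin (m+1),
          (-1:ℝ)^(c:ℕ) * (R ⟨k, hkm⟩).eval (((n:ℤ):ℝ) - ((c:ℕ):ℝ)) * st18_dmin R (n:ℤ) c := by
    rw [Finset.mul_sum]
    refine Finset.sum_congr rfl fun c _ => by ring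
  rw [hfinal, ← st18_Nmat_expand R (n:ℤ)
    (fun c => (R ⟨k, hkm⟩).eval (((n:ℤ):ℝ) - ((c:ℕ):ℝ))),
    st18_Nmat_det_zero R (n:ℤ) k hkm, mul_zero]
end
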